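/- arXiv:1710.00374 — 3 statements merged into one kernel-verified Lean document; each statement's English description precedes it below -/
import Mathlib

section
/- Let r ≥ 3 and ℓ ≥ 1 be given. Then forb(m, r, 𝒯_ℓ(r) \ 𝒯_ℓ(2)) is Θ(2^m): for every m ≥ 1 one has 2^m ≤ forb(m, r, 𝒯_ℓ(r) \ 𝒯_ℓ(2)), and there is a constant c (depending only on r and ℓ) such that forb(m, r, 𝒯_ℓ(r) \ 𝒯_ℓ(2)) ≤ c · 2^m for every m ≥ 1. -/
/-- A matrix with natural number entries, of size `k × p`. -/
abbrev MatN (k p : ℕ) := Matrix (Fin k) (Fin p) ℕ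

/-- A matrix bundled with its dimensions. -/
structure CMat where
  rows : ℕ
  cols : ℕ
  mat : MatN rows cols

/-- A matrix is simple if no two of its columns are equal. -/
def SimpleM {m n : ℕ} (A : MatN m n) : Prop :=
  ∀ j₁ j₂ : Fin n, (∀ i, A i j₁ = A i j₂) → j₁ = j₂

/-- An `r`-matrix: all entries lie in `{0, 1, …, r-1}`. -/
def RMat (r : ℕ) {m n : ℕ} (A : MatN m n) : Prop := ∀ i j, A i j < r

/-- `F` is a configuration of `A` (written `F ≺ A`): some submatrix of `A` is a row
and column permutation of `F`; equivalently there are injections of the rows and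
columns of `F` into those of `A` realizing the entries of `F`. -/
def IsConfig {k p m n : ℕ} (F : MatN k p) (A : MatN m n) : Prop :=
  ∃ f : Fin k → Fin m, ∃ g : Fin p → Fin n,
    Function.Injective f ∧ Function.Injective g ∧ ∀ i j, A (f i) (g j) = F i j

/-- `A` avoids every matrix of the family `𝓕` as a configuration. -/
def AvoidsFam {m n : ℕ} (A : MatN m n) (𝓕 : Set CMat) : Prop :=
  ∀ F ∈ 𝓕, ¬ IsConfig F.mat A

/-- `forb m r 𝓕`: the maximum number of columns of an `m`-rowed simple `r`-matrix
having no member of `𝓕` as a configuration. -/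
noncomputable def forb (m r : ℕ) (𝓕 : Set CMat) : ℕ :=
  sSup { n : ℕ | ∃ A : MatN m n, RMat r A ∧ SimpleM A ∧ AvoidsFam A 𝓕 }

/-- `forbmax m r 𝓕`: the maximum of `forb m' r 𝓕` over `m' ≤ m`. -/
noncomputable def forbmax (m r : ℕ) (𝓕 : Set CMat) : ℕ :=
  sSup { x : ℕ | ∃ m' ≤ m, x = forb m' r 𝓕 }

/-- The number of 1's in column `j` of `A` (the column sum). -/
def colSum {m n : ℕ} (A : MatN m n) (j : Fin n) : ℕ :=
  (Finset.univ.filter (fun i => A i j = 1)).card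

/-- `forbK k m r 𝓕`: as `forb`, but restricted to matrices all of whose columns
have exactly `k` entries equal to 1. -/
noncomputable def forbK (k m r : ℕ) (𝓕 : Set CMat) : ℕ :=
  sSup { n : ℕ | ∃ A : MatN m n, RMat r A ∧ SimpleM A ∧ (∀ j, colSum A j = k) ∧
    AvoidsFam A 𝓕 }

/-- `forbmaxK k m r 𝓕`: the maximum of `forbK k m' r 𝓕` over `m' ≤ m`. -/
noncomputable def forbmaxK (k m r : ℕ) (𝓕 : Set CMat) : ℕ :=
  sSup { x : ℕ | ∃ m' ≤ m, x = forbK k m' r 𝓕 }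

/-- `Imat ℓ a b`: the `ℓ × ℓ` matrix with `a` on the diagonal and `b` off the diagonal. -/
def Imat (ℓ a b : ℕ) : MatN ℓ ℓ := fun i j => if i = j then a else b

/-- `Tmat ℓ a b`: the `ℓ × ℓ` matrix with `a` below the diagonal and `b` on or above it. -/
def Tmat (ℓ a b : ℕ) : MatN ℓ ℓ := fun i j => if (j : ℕ) < (i : ℕ) then a else b

/-- `Tmat3 ℓ a b c`: the `ℓ × ℓ` matrix with `a` below, `b` on, and `c` above the diagonal. -/
def Tmat3 (ℓ a b c : ℕ) : MatN ℓ ℓ :=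
  fun i j => if (j : ℕ) < (i : ℕ) then a else if i = j then b else c

/-- The family `𝒯_ℓ(r)` of all `I_ℓ(a,b)` and `T_ℓ(a,b)` with `a,b ∈ {0,…,r-1}`, `a ≠ b`. -/
def TFam (ℓ r : ℕ) : Set CMat :=
  { M | ∃ a b : ℕ, a < r ∧ b < r ∧ a ≠ b ∧
      (M = ⟨ℓ, ℓ, Imat ℓ a b⟩ ∨ M = ⟨ℓ, ℓ, Tmat ℓ a b⟩) }

/-- `t·F`: the concatenation of `t` copies of `F` side by side. -/
def tcopies {k p : ℕ} (t : ℕ) (F : MatN k p) : MatN k (t * p) :=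
  fun i j => F i ⟨(j : ℕ) % p, Nat.mod_lt _ (by
    rcases Nat.eq_zero_or_pos p with h | h
    · exact absurd j.isLt (by simp [h])
    · exact h)⟩

/-- `0×1×F`: `F` with an extra row of 0's and an extra row of 1's appended. -/
def zeroOneTop {k p : ℕ} (F : MatN k p) : MatN (k + 2) p :=
  fun i j => if h : (i : ℕ) < k then F ⟨i, h⟩ j else if (i : ℕ) = k then 0 else 1

/-- `F_{a,b,c,d}`: the `(a+b+c+d) × 2` matrix with `a` rows `[1 1]`, `b` rows `[1 0]`,
`c` rows `[0 1]` and `d` rows `[0 0]`. -/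
def Fabcd (a b c d : ℕ) : MatN (a + b + c + d) 2 :=
  fun i j =>
    if (i : ℕ) < a then 1
    else if (i : ℕ) < a + b then (if (j : ℕ) = 0 then 1 else 0)
    else if (i : ℕ) < a + b + c then (if (j : ℕ) = 0 then 0 else 1)
    else 0

/-! ### Auxiliary lemmas -/

lemma pigeon_subseq (N t D : ℕ) (c : ℕ → ℕ) (hc : ∀ p, p < D → c p < N)
    (hD : N * (t - 1) < D) :
    ∃ (φ : ℕ → ℕ) (x : ℕ), (∀ i j, i < j → j < t → φ i < φ j) ∧
      (∀ i, i < t → φ i < D ∧ c (φ i) = x) := by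
  obtain ⟨y, -, hy⟩ := Finset.exists_lt_card_fiber_of_mul_lt_card_of_maps_to
    (s := Finset.range D) (t := Finset.range N) (f := c) (n := t - 1)
    (fun a ha => by simp only [Finset.mem_range] at *; exact hc a ha)
    (by simpa using hD)
  have hy' : t ≤ (Finset.filter (fun x => c x = y) (Finset.range D)).card := by omega
  obtain ⟨B, hBsub, hBcard⟩ := Finset.exists_subset_card_eq hy'
  set e := B.orderEmbOfFin hBcard
  refine ⟨fun i => if h : i < t then e ⟨i, h⟩ else 0, y, ?_, ?_⟩
  · intro i j hij hj
    have hi : i < t := by omega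
    simp only [dif_pos hi, dif_pos hj]
    exact e.strictMono (by exact hij)
  · intro i hi
    simp only [dif_pos hi]
    have := hBsub (Finset.orderEmbOfFin_mem B hBcard ⟨i, hi⟩)
    simp only [Finset.mem_filter, Finset.mem_range] at this
    exact this

lemma greedy_lemma (r : ℕ) (hr : 2 ≤ r) (b : ℕ → ℕ → ℕ) (hb : ∀ p q, b p q < r) :
    ∀ (T : ℕ) (S : Finset ℕ), r ^ T ≤ S.card →
    ∃ (ψ γ : ℕ → ℕ), (∀ i j, i < j → j < T → ψ i < ψ j) ∧ (∀ i, i < T → ψ i ∈ S) ∧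
      (∀ i, i < T → γ i < r) ∧ (∀ i j, i < j → j < T → b (ψ j) (ψ i) = γ i) := by
  intro T
  induction T with
  | zero =>
    intro S hS
    exact ⟨fun _ => 0, fun _ => 0, by omega, by omega, by omega, by omega⟩
  | succ T ih =>
    intro S hS
    have hrT : 1 ≤ r ^ T := Nat.one_le_pow _ _ (by omega)
    have hrT1 : r * r ^ T ≤ S.card := by
      calc r * r ^ T = r ^ (T + 1) := by ring
      _ ≤ S.card := hS
    have hne : S.Nonempty := Finset.card_pos.mp (by nlinarith)
    set q₀ := S.min' hne with hq₀
    set S₁ := S.erase q₀ with hS₁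
    have hS₁card : S.card - 1 ≤ S₁.card := by
      rw [hS₁, Finset.card_erase_of_mem (S.min'_mem hne)]
    have harith : r * (r ^ T - 1) + r * 1 = r * r ^ T := by
      rw [← Nat.mul_add]; congr 1; omega
    obtain ⟨y, hyr, hy⟩ := Finset.exists_lt_card_fiber_of_mul_lt_card_of_maps_to
      (s := S₁) (t := Finset.range r) (f := fun p => b p q₀) (n := r ^ T - 1)
      (fun a _ => Finset.mem_range.mpr (hb a q₀))
      (by simp only [Finset.card_range]; omega)
    simp only [Finset.mem_range] at hyr
    set Fib := S₁.filter (fun p => b p q₀ = y) with hFib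
    have hFibcard : r ^ T ≤ Fib.card := by omega
    obtain ⟨ψ', γ', hmono, hmem, hγr, hval⟩ := ih Fib hFibcard
    have hFibS : ∀ p ∈ Fib, p ∈ S ∧ q₀ < p ∧ b p q₀ = y := by
      intro p hp
      simp only [hFib, Finset.mem_filter, hS₁, Finset.mem_erase] at hp
      refine ⟨hp.1.2, ?_, hp.2⟩
      have := S.min'_le _ hp.1.2
      omega
    refine ⟨fun i => match i with | 0 => q₀ | (k+1) => ψ' k,
            fun i => match i with | 0 => y | (k+1) => γ' k, ?_, ?_, ?_, ?_⟩
    · rintro (_|i) (_|j) hij hj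
      · omega
      · exact (hFibS _ (hmem j (by omega))).2.1
      · omega
      · exact hmono i j (by omega) (by omega)
    · rintro (_|i) hi
      · exact S.min'_mem hne
      · exact (hFibS _ (hmem i (by omega))).1
    · rintro (_|i) hi
      · exact hyr
      · exact hγr i (by omega)
    · rintro (_|i) (_|j) hij hj
      · omega
      · exact (hFibS _ (hmem j (by omega))).2.2
      · omega
      · exact hval i j (by omega) (by omega)

lemma path_lemma (r : ℕ) (hr : 2 ≤ r) :
    ∀ (m D n : ℕ) (a : ℕ → ℕ → ℕ),
    (∀ i j, i < m → j < n → a i j < r) →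
    (∀ j₁ j₂, j₁ < n → j₂ < n → (∀ i, i < m → a i j₁ = a i j₂) → j₁ = j₂) →
    r ^ D < n →
    ∃ row col u v : ℕ → ℕ,
      (∀ p, p < D → row p < m) ∧ (∀ q, q ≤ D → col q < n) ∧
      (∀ p q, p < q → q < D → row p < row q) ∧
      (∀ p, p < D → u p ≠ v p) ∧
      (∀ p, p < D → a (row p) (col p) = u p) ∧
      (∀ p q, p < q → q ≤ D → a (row p) (col q) = v p) := by
  intro m
  induction m with
  | zero =>
    intro D n a ha hS hn
    exfalso
    have h1 : 1 ≤ r ^ D := Nat.one_le_pow _ _ (by omega)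
    have := hS 0 1 (by omega) (by omega) (by omega)
    omega
  | succ m ih =>
    intro D n a ha hS hn
    match D with
    | 0 =>
      have h1 : (1:ℕ) ≤ 1 := le_refl 1
      refine ⟨fun _ => 0, fun _ => 0, fun _ => 0, fun _ => 0, by omega, ?_, by omega,
        by omega, by omega, by omega⟩
      intro q _
      show (0:ℕ) < n
      simp only [pow_zero] at hn
      omega
    | D + 1 =>
      have hn1 : 2 ≤ n := by
        have h0 : 1 ≤ r ^ D := Nat.one_le_pow _ _ (by omega)
        have h3 : r ^ (D + 1) = r * r ^ D := by ring
        nlinarith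
      by_cases hsame : ∀ j, j < n → a 0 j = a 0 0
      · obtain ⟨row', col', u, v, hrb, hcb, hrm, huv, hdiag, habove⟩ :=
          ih (D + 1) n (fun i j => a (i + 1) j)
            (fun i j hi hj => ha (i+1) j (by omega) hj)
            (fun j₁ j₂ h₁ h₂ h => hS j₁ j₂ h₁ h₂ (fun i hi => by
              match i with
              | 0 => rw [hsame j₁ h₁, hsame j₂ h₂]
              | i + 1 => exact h i (by omega)))
            hn
        exact ⟨fun p => row' p + 1, col', u, v,
          fun p hp => by show row' p + 1 < m + 1; have := hrb p hp; omega, hcb,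
          fun p q hpq hq => by show row' p + 1 < row' q + 1; have := hrm p q hpq hq; omega,
          huv, hdiag, habove⟩
      · push_neg at hsame
        obtain ⟨j₁, hj₁n, hj₁⟩ := hsame
        have hbig : ∃ x, r ^ D < ((Finset.range n).filter (fun j => a 0 j = x)).card := by
          by_contra hcon
          push_neg at hcon
          have hsub : Finset.range n ⊆
              (Finset.range r).biUnion (fun x => (Finset.range n).filter (fun j => a 0 j = x)) := by
            intro j hj
            refine Finset.mem_biUnion.mpr ⟨a 0 j, Finset.mem_range.mpr
              (ha 0 j (by omega) (Finset.mem_range.mp hj)), ?_⟩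
            simp [Finset.mem_filter, hj]
          have h1 : n ≤ ∑ x ∈ Finset.range r, ((Finset.range n).filter (fun j => a 0 j = x)).card := by
            calc n = (Finset.range n).card := by simp
            _ ≤ _ := le_trans (Finset.card_le_card hsub) Finset.card_biUnion_le
          have h2 : ∑ x ∈ Finset.range r, ((Finset.range n).filter (fun j => a 0 j = x)).card
              ≤ r * r ^ D := by
            calc _ ≤ ∑ _x ∈ Finset.range r, r ^ D := Finset.sum_le_sum (fun x _ => hcon x)
            _ = r * r ^ D := by simp [Finset.sum_const, mul_comm]
          have h3 : r ^ (D + 1) = r * r ^ D := by ring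
          omega
        obtain ⟨x₀, hbig⟩ := hbig
        set s := (Finset.range n).filter (fun j => a 0 j = x₀) with hs
        set K := s.card with hK
        set e := s.orderEmbOfFin (rfl : s.card = K) with he
        set colemb : ℕ → ℕ := fun j => if h : j < K then e ⟨j, h⟩ else 0 with hcolemb
        have hmem : ∀ j, j < K → colemb j < n ∧ a 0 (colemb j) = x₀ := by
          intro j hj
          have h1 : e ⟨j, hj⟩ ∈ s := Finset.orderEmbOfFin_mem s rfl _
          simp only [hs, Finset.mem_filter, Finset.mem_range] at h1
          simp only [hcolemb, dif_pos hj]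
          exact h1
        have hinj : ∀ j₁ j₂, j₁ < K → j₂ < K → colemb j₁ = colemb j₂ → j₁ = j₂ := by
          intro j₁ j₂ h₁ h₂ h
          simp only [hcolemb, dif_pos h₁, dif_pos h₂] at h
          exact congrArg Fin.val (e.injective h)
        obtain ⟨c₁, hc₁n, hc₁⟩ : ∃ c₁, c₁ < n ∧ a 0 c₁ ≠ x₀ := by
          by_cases h0 : a 0 0 = x₀
          · exact ⟨j₁, hj₁n, by rw [← h0]; exact hj₁⟩
          · exact ⟨0, by omega, h0⟩
        obtain ⟨row', col', u', v', hrb, hcb, hrm, huv, hdiag, habove⟩ :=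
          ih D K (fun i j => a (i + 1) (colemb j))
            (fun i j hi hj => ha (i+1) (colemb j) (by omega) (hmem j hj).1)
            (fun j₁ j₂ h₁ h₂ h => by
              refine hinj j₁ j₂ h₁ h₂ (hS _ _ (hmem j₁ h₁).1 (hmem j₂ h₂).1 (fun i hi => ?_))
              match i with
              | 0 => rw [(hmem j₁ h₁).2, (hmem j₂ h₂).2]
              | i + 1 => exact h i (by omega))
            hbig
        refine ⟨fun p => match p with | 0 => 0 | (p+1) => row' p + 1,
                fun q => match q with | 0 => c₁ | (q+1) => colemb (col' q),
                fun p => match p with | 0 => a 0 c₁ | (p+1) => u' p,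
                fun p => match p with | 0 => x₀ | (p+1) => v' p,
                ?_, ?_, ?_, ?_, ?_, ?_⟩
        · rintro (_|p) hp
          · show (0:ℕ) < m + 1; omega
          · show row' p + 1 < m + 1; have := hrb p (by omega); omega
        · rintro (_|q) hq
          · exact hc₁n
          · exact (hmem _ (hcb q (by omega))).1
        · rintro (_|p) (_|q) hpq hq
          · omega
          · show (0:ℕ) < row' q + 1; omega
          · omega
          · show row' p + 1 < row' q + 1; have := hrm p q (by omega) (by omega); omega
        · rintro (_|p) hp
          · exact hc₁
          · exact huv p (by omega)
        · rintro (_|p) hp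
          · rfl
          · exact hdiag p (by omega)
        · rintro (_|p) (_|q) hpq hq
          · omega
          · exact (hmem _ (hcb q (by omega))).2
          · omega
          · exact habove p q (by omega) (by omega)
lemma tfam2_entries {ℓ : ℕ} (X : MatN ℓ ℓ) (h : (⟨ℓ, ℓ, X⟩ : CMat) ∈ TFam ℓ 2) :
    ∀ i j, X i j < 2 := by
  obtain ⟨a, b, ha, hb, hab, h1 | h1⟩ := h <;>
  · simp only [CMat.mk.injEq, heq_eq_eq, true_and] at h1
    rw [h1]
    intro i j
    first
      | (simp only [Imat]; split <;> omega)
      | (simp only [Tmat]; split <;> omega)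

lemma encode_inj (r u1 v1 u2 v2 : ℕ) (h1 : v1 < r) (h2 : v2 < r)
    (he : u1 * r + v1 = u2 * r + v2) : u1 = u2 ∧ v1 = v2 := by
  rcases lt_trichotomy u1 u2 with h | h | h
  · nlinarith
  · subst h; omega
  · nlinarith

/-- The constant bound for simple matrices with entries in `{1,…,r-1}` avoiding
`𝒯_ℓ(r) \ 𝒯_ℓ(2)`, for `ℓ ≥ 2`. -/
lemma core_bound (r ℓ : ℕ) (hr : 3 ≤ r) (hℓ : 2 ≤ ℓ) (m n : ℕ) (A : MatN m n)
    (hA1 : ∀ i j, 1 ≤ A i j) (hAr : RMat r A) (hS : SimpleM A)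
    (hAv : AvoidsFam A (TFam ℓ r \ TFam ℓ 2)) :
    n ≤ r ^ (r ^ 2 * r ^ (r * (2 * ℓ))) := by
  by_contra hn
  push_neg at hn
  set M := 2 * ℓ with hM
  set T := r * M with hT
  set K := r ^ T with hK
  set D := r ^ 2 * K with hD
  -- total extension of A
  set a : ℕ → ℕ → ℕ := fun i j => if h : i < m ∧ j < n then A ⟨i, h.1⟩ ⟨j, h.2⟩ else 0
    with ha_def
  have haR : ∀ i j, a i j < r := by
    intro i j
    simp only [ha_def]
    split
    · exact hAr _ _
    · omega
  have haA : ∀ (i j : ℕ) (h1 : i < m) (h2 : j < n), a i j = A ⟨i, h1⟩ ⟨j, h2⟩ := by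
    intro i j h1 h2
    simp only [ha_def, dif_pos (⟨h1, h2⟩ : i < m ∧ j < n)]
  have haS : ∀ j₁ j₂, j₁ < n → j₂ < n → (∀ i, i < m → a i j₁ = a i j₂) → j₁ = j₂ := by
    intro j₁ j₂ h₁ h₂ h
    have := hS ⟨j₁, h₁⟩ ⟨j₂, h₂⟩ (fun i => by
      have := h i.val i.isLt
      rwa [haA _ _ i.isLt h₁, haA _ _ i.isLt h₂, Fin.eta] at this)
    exact congrArg Fin.val this
  obtain ⟨row, col, u, v, hrb, hcb, hrm, huv, hdiag, habove⟩ :=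
    path_lemma r (by omega) m D n a (fun i j hi hj => haR i j) haS hn
  -- first pigeonhole: make u, v constant
  have hc1 : ∀ p, p < D → u p * r + v p < r ^ 2 := by
    intro p hp
    have h1 : u p < r := by rw [← hdiag p hp]; exact haR _ _
    have h2 : v p < r := by rw [← habove p (p+1) (by omega) (by omega)]; exact haR _ _
    have : r ^ 2 = r * r := by ring
    nlinarith
  obtain ⟨φ, x₁, hφm, hφ⟩ := pigeon_subseq (r ^ 2) K D (fun p => u p * r + v p) hc1
    (by
      have h1 : 1 ≤ K := Nat.one_le_pow _ _ (by omega)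
      have h2 : 1 ≤ r ^ 2 := Nat.one_le_pow _ _ (by omega)
      have e : r ^ 2 * K = r ^ 2 * (K - 1) + r ^ 2 := by
        conv_lhs => rw [show K = (K - 1) + 1 from by omega]
        rw [Nat.mul_succ]
      show r ^ 2 * (K - 1) < D
      omega)
  have hK1 : 0 < K := Nat.one_le_pow _ _ (by omega)
  set ustar := u (φ 0) with hustar
  set vstar := v (φ 0) with hvstar
  have huvconst : ∀ i, i < K → u (φ i) = ustar ∧ v (φ i) = vstar := by
    intro i hi
    have e1 : u (φ i) * r + v (φ i) = x₁ := (hφ i hi).2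
    have e2 : ustar * r + vstar = x₁ := (hφ 0 hK1).2
    have hb1 : v (φ i) < r := by
      rw [← habove (φ i) (φ i + 1) (by omega) (by have := (hφ i hi).1; omega)]
      exact haR _ _
    have hb2 : v (φ 0) < r := by
      rw [← habove (φ 0) (φ 0 + 1) (by omega) (by have := (hφ 0 hK1).1; omega)]
      exact haR _ _
    have hb2' : vstar < r := hb2
    exact encode_inj r _ _ _ _ hb1 hb2' (e1.trans e2.symm)
  have hustar_ne : ustar ≠ vstar := huv (φ 0) (hφ 0 hK1).1
  -- pattern 2
  set R2 : ℕ → ℕ := fun i => row (φ i) with hR2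
  set C2 : ℕ → ℕ := fun i => col (φ i) with hC2
  have hP2diag : ∀ i, i < K → a (R2 i) (C2 i) = ustar := by
    intro i hi
    rw [hR2, hC2]
    show a (row (φ i)) (col (φ i)) = ustar
    rw [hdiag (φ i) (hφ i hi).1]
    exact (huvconst i hi).1
  have hP2above : ∀ i j, i < j → j < K → a (R2 i) (C2 j) = vstar := by
    intro i j hij hj
    show a (row (φ i)) (col (φ j)) = vstar
    rw [habove (φ i) (φ j) (hφm i j hij hj) (le_of_lt (hφ j hj).1)]
    exact (huvconst i (by omega)).2
  -- greedy: make below-entries depend only on the column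
  obtain ⟨ψ, γ, hψm, hψmem, hγr, hγ⟩ := greedy_lemma r (by omega)
    (fun p q => a (R2 p) (C2 q)) (fun p q => haR _ _) T (Finset.range K)
    (by simp [hK])
  have hψK : ∀ i, i < T → ψ i < K := by
    intro i hi
    exact Finset.mem_range.mp (hψmem i hi)
  -- second pigeonhole: make below-value constant
  obtain ⟨χ, w, hχm, hχ⟩ := pigeon_subseq r M T γ hγr
    (by
      have e : r * M = r * (M - 1) + r := by
        conv_lhs => rw [show M = (M - 1) + 1 from by omega]
        rw [Nat.mul_succ]
      show r * (M - 1) < T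
      omega)
  set R4 : ℕ → ℕ := fun i => R2 (ψ (χ i)) with hR4
  set C4 : ℕ → ℕ := fun i => C2 (ψ (χ i)) with hC4
  have hMpos : 0 < M := by omega
  have hidx : ∀ i, i < M → ψ (χ i) < K := fun i hi => hψK _ (hχ i hi).1
  have hb4 : ∀ i, i < M → R4 i < m ∧ C4 i < n := by
    intro i hi
    constructor
    · exact hrb _ (hφ _ (hidx i hi)).1
    · exact hcb _ (le_of_lt (hφ _ (hidx i hi)).1)
  have hR4m : ∀ i j, i < j → j < M → R4 i < R4 j := by
    intro i j hij hj
    exact hrm _ _ (hφm _ _ (hψm _ _ (hχm i j hij hj) (hχ j hj).1) (hidx j hj)) (hφ _ (hidx j hj)).1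
  have hP4 : ∀ i j, i < M → j < M →
      a (R4 i) (C4 j) = if i = j then ustar else if i < j then vstar else w := by
    intro i j hi hj
    rcases lt_trichotomy i j with h | h | h
    · rw [if_neg (by omega), if_pos h]
      exact hP2above _ _ (hψm _ _ (hχm i j h hj) (hχ j hj).1) (hidx j hj)
    · subst h
      rw [if_pos rfl]
      exact hP2diag _ (hidx i hi)
    · rw [if_neg (by omega), if_neg (by omega)]
      have := hγ (χ j) (χ i) (hχm j i h hi) (hχ i hi).1
      rw [this, (hχ j hj).2]
  -- the three symbols are ≥ 1 and < r
  have hval1 : ∀ i j, i < M → j < M → 1 ≤ a (R4 i) (C4 j) ∧ a (R4 i) (C4 j) < r := by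
    intro i j hi hj
    rw [haA _ _ (hb4 i hi).1 (hb4 j hj).2]
    exact ⟨hA1 _ _, hAr _ _⟩
  have hM2 : 2 ≤ M := by omega
  have hust : 1 ≤ ustar ∧ ustar < r := by
    have := hval1 0 0 (by omega) (by omega)
    rwa [hP4 0 0 (by omega) (by omega), if_pos rfl] at this
  have hvst : 1 ≤ vstar ∧ vstar < r := by
    have := hval1 0 1 (by omega) (by omega)
    rwa [hP4 0 1 (by omega) (by omega), if_neg (by omega), if_pos (by omega)] at this
  have hwst : 1 ≤ w ∧ w < r := by
    have := hval1 1 0 (by omega) (by omega)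
    rwa [hP4 1 0 (by omega) (by omega), if_neg (by omega), if_neg (by omega)] at this
  -- extraction
  by_cases hwv : w = vstar
  · -- Imat ℓ ustar vstar is a configuration
    set F : CMat := ⟨ℓ, ℓ, Imat ℓ ustar vstar⟩ with hF
    have hbnd : ∀ i : Fin ℓ, R4 i < m ∧ C4 i < n := fun i => hb4 i (by omega)
    set f : Fin ℓ → Fin m := fun i => ⟨R4 i, (hbnd i).1⟩ with hf
    set g : Fin ℓ → Fin n := fun j => ⟨C4 j, (hbnd j).2⟩ with hg
    have hent : ∀ i j : Fin ℓ, A (f i) (g j) = Imat ℓ ustar vstar i j := by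
      intro i j
      have h1 := hP4 i j (by omega) (by omega)
      rw [haA _ _ (hbnd i).1 (hbnd j).2] at h1
      rw [hf, hg]
      show A ⟨R4 i, _⟩ ⟨C4 j, _⟩ = _
      rw [h1, Imat]
      rcases lt_trichotomy (i : ℕ) (j : ℕ) with h | h | h
      · rw [if_neg (by omega), if_pos h, if_neg (by rw [Fin.ext_iff]; omega)]
      · rw [if_pos (by omega), if_pos (by rw [Fin.ext_iff]; omega)]
      · rw [if_neg (by omega), if_neg (by omega), if_neg (by rw [Fin.ext_iff]; omega), hwv]
    have hfinj : Function.Injective f := by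
      intro i i' h
      rw [hf] at h
      simp only [Fin.mk.injEq] at h
      by_contra hne
      rcases lt_trichotomy (i : ℕ) (i' : ℕ) with hlt | heq | hlt
      · have := hR4m i i' hlt (by omega); omega
      · exact hne (Fin.ext heq)
      · have := hR4m i' i hlt (by omega); omega
    have key : ∀ x y : ℕ, x < y → y < M → C4 x = C4 y → False := by
      intro x y hxy hy hC
      have h1 := hP4 y x (by omega) (by omega)
      have h2 := hP4 y y (by omega) (by omega)
      rw [if_neg (by omega), if_neg (by omega)] at h1
      rw [if_pos rfl] at h2
      rw [hC] at h1
      omega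
    have hginj : Function.Injective g := by
      intro j j' h
      rw [hg] at h
      simp only [Fin.mk.injEq] at h
      by_contra hne
      rcases lt_trichotomy (j : ℕ) (j' : ℕ) with h1 | h1 | h1
      · exact key j j' h1 (by omega) h
      · exact hne (Fin.ext h1)
      · exact key j' j h1 (by omega) h.symm
    exact hAv F ⟨⟨ustar, vstar, hust.2, hvst.2, hustar_ne, Or.inl rfl⟩, by
      intro hmem
      have e1 : ustar < 2 := by
        simpa [Imat] using tfam2_entries _ hmem ⟨0, by omega⟩ ⟨0, by omega⟩
      have e2 : vstar < 2 := by
        simpa [Imat, Fin.ext_iff] using tfam2_entries _ hmem ⟨0, by omega⟩ ⟨1, by omega⟩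
      omega⟩ ⟨f, g, hfinj, hginj, hent⟩
  · -- Tmat ℓ w vstar is a configuration
    set F : CMat := ⟨ℓ, ℓ, Tmat ℓ w vstar⟩ with hF
    have hbr : ∀ i : Fin ℓ, 2 * (i : ℕ) < M := by
      intro i; have := i.isLt; omega
    have hbc : ∀ j : Fin ℓ, 2 * (j : ℕ) + 1 < M := by
      intro j; have := j.isLt; omega
    set f : Fin ℓ → Fin m := fun i => ⟨R4 (2 * i), (hb4 _ (hbr i)).1⟩ with hf
    set g : Fin ℓ → Fin n := fun j => ⟨C4 (2 * j + 1), (hb4 _ (hbc j)).2⟩ with hg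
    have hent : ∀ i j : Fin ℓ, A (f i) (g j) = Tmat ℓ w vstar i j := by
      intro i j
      have h1 := hP4 (2 * i) (2 * j + 1) (hbr i) (hbc j)
      rw [haA _ _ (hb4 _ (hbr i)).1 (hb4 _ (hbc j)).2] at h1
      rw [hf, hg]
      show A ⟨R4 (2 * i), _⟩ ⟨C4 (2 * j + 1), _⟩ = _
      rw [h1, Tmat]
      rcases Nat.lt_or_ge (j : ℕ) (i : ℕ) with h | h
      · rw [if_neg (by omega), if_neg (by omega), if_pos (by omega)]
      · rw [if_neg (by omega), if_pos (by omega), if_neg (by omega)]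
    have hfinj : Function.Injective f := by
      intro i i' h
      rw [hf] at h
      simp only [Fin.mk.injEq] at h
      by_contra hne
      rcases lt_trichotomy (i : ℕ) (i' : ℕ) with hlt | heq | hlt
      · have := hR4m (2 * i) (2 * i') (by omega) (hbr i'); omega
      · exact hne (Fin.ext heq)
      · have := hR4m (2 * i') (2 * i) (by omega) (hbr i); omega
    have key : ∀ x y : ℕ, x < y → y < M → x < 2 * (ℓ - 1) → 2 * (ℓ - 1) < y →
        C4 x = C4 y → False := by
      intro x y hxy hy hx2 hy2 hC
      set z := 2 * (ℓ - 1) with hz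
      have h1 := hP4 z x (by omega) (by omega)
      have h2 := hP4 z y (by omega) (by omega)
      rw [if_neg (by omega), if_neg (by omega)] at h1
      rw [if_neg (by omega), if_pos (by omega)] at h2
      rw [hC] at h1
      omega
    have hginj : Function.Injective g := by
      intro j j' h
      rw [hg] at h
      simp only [Fin.mk.injEq] at h
      by_contra hne
      have kk : ∀ x y : Fin ℓ, (x : ℕ) < (y : ℕ) →
          C4 (2 * x + 1) = C4 (2 * y + 1) → False := by
        intro x y hxy hC
        have hx := x.isLt
        have hy := y.isLt
        have h1 := hP4 (2 * y) (2 * x + 1) (by omega) (by omega)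
        have h2 := hP4 (2 * y) (2 * y + 1) (by omega) (by omega)
        rw [if_neg (by omega), if_neg (by omega)] at h1
        rw [if_neg (by omega), if_pos (by omega)] at h2
        rw [hC] at h1
        omega
      rcases lt_trichotomy (j : ℕ) (j' : ℕ) with h1 | h1 | h1
      · exact kk j j' h1 h
      · exact hne (Fin.ext h1)
      · exact kk j' j h1 h.symm
    exact hAv F ⟨⟨w, vstar, hwst.2, hvst.2, hwv, Or.inr rfl⟩, by
      intro hmem
      have e1 : w < 2 := by
        simpa [Tmat] using tfam2_entries _ hmem ⟨1, by omega⟩ ⟨0, by omega⟩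
      have e2 : vstar < 2 := by
        simpa [Tmat] using tfam2_entries _ hmem ⟨0, by omega⟩ ⟨0, by omega⟩
      omega⟩ ⟨f, g, hfinj, hginj, hent⟩
lemma core_bound_one (r : ℕ) (hr : 3 ≤ r) (m n : ℕ) (A : MatN m n)
    (hA1 : ∀ i j, 1 ≤ A i j) (hAr : RMat r A) (hS : SimpleM A)
    (hAv : AvoidsFam A (TFam 1 r \ TFam 1 2)) : n ≤ 1 := by
  have hone : ∀ i j, A i j = 1 := by
    intro i j
    by_contra hcon
    have h2 : 2 ≤ A i j := by have := hA1 i j; omega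
    refine hAv ⟨1, 1, Imat 1 (A i j) 0⟩ ⟨⟨A i j, 0, hAr i j, by omega, by omega, Or.inl rfl⟩, ?_⟩
      ⟨fun _ => i, fun _ => j, fun a b _ => Subsingleton.elim a b,
        fun a b _ => Subsingleton.elim a b, fun a b => by
          show A i j = Imat 1 (A i j) 0 a b
          rw [Imat, if_pos (Subsingleton.elim a b)]⟩
    intro hmem
    have := tfam2_entries _ hmem ⟨0, by omega⟩ ⟨0, by omega⟩
    rw [Imat, if_pos rfl] at this
    omega
  by_contra hcon
  push_neg at hcon
  have : (⟨0, by omega⟩ : Fin n) = ⟨1, by omega⟩ :=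
    hS _ _ (fun i => by rw [hone, hone])
  simp [Fin.ext_iff] at this

lemma fiber_bound (r ℓ : ℕ) (hr : 3 ≤ r) (hℓ : 1 ≤ ℓ) (m n : ℕ) (A : MatN m n)
    (hAr : RMat r A) (hS : SimpleM A) (hAv : AvoidsFam A (TFam ℓ r \ TFam ℓ 2)) :
    n ≤ 2 ^ m * r ^ (r ^ 2 * r ^ (r * (2 * ℓ))) := by
  classical
  set C := r ^ (r ^ 2 * r ^ (r * (2 * ℓ))) with hC
  set Φ : Fin n → (Fin m → Bool) := fun j i => decide (A i j ≠ 0) with hΦ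
  have hfiber : ∀ b ∈ Finset.univ.image Φ,
      (Finset.univ.filter (fun j => Φ j = b)).card ≤ C := by
    intro b _
    set fib := Finset.univ.filter (fun j => Φ j = b) with hfib
    set t := fib.card with ht
    set ce := fib.orderEmbOfFin (rfl : fib.card = t) with hce
    have hcemem : ∀ j, ce j ∈ fib := fun j => Finset.orderEmbOfFin_mem fib rfl j
    have hceΦ : ∀ j, Φ (ce j) = b := by
      intro j
      have := hcemem j
      simp only [hfib, Finset.mem_filter] at this
      exact this.2
    set sr := Finset.univ.filter (fun i : Fin m => b i = true) with hsr
    set mr := sr.card with hmr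
    set re := sr.orderEmbOfFin (rfl : sr.card = mr) with hre
    have hremem : ∀ i, b (re i) = true := by
      intro i
      have := Finset.orderEmbOfFin_mem sr rfl i
      simp only [hsr, Finset.mem_filter] at this
      exact this.2
    set B : MatN mr t := fun i j => A (re i) (ce j) with hB
    have hBzero : ∀ (i : Fin m) (j : Fin t), b i = false → A i (ce j) = 0 := by
      intro i j hb
      have := congrFun (hceΦ j) i
      rw [hb, hΦ] at this
      simpa using this
    have hB1 : ∀ i j, 1 ≤ B i j := by
      intro i j
      have := congrFun (hceΦ j) (re i)
      rw [hremem i, hΦ] at this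
      have h0 : A (re i) (ce j) ≠ 0 := by simpa using this.symm
      show 1 ≤ A (re i) (ce j)
      omega
    have hBr : RMat r B := fun i j => hAr _ _
    have hBS : SimpleM B := by
      intro j₁ j₂ h
      have : ce j₁ = ce j₂ := by
        refine hS _ _ (fun i => ?_)
        rcases Bool.eq_false_or_eq_true (b i) with hb | hb
        · have : i ∈ sr := by simp [hsr, hb]
          have hr2 : i ∈ Set.range re := by rw [Finset.range_orderEmbOfFin]; exact this
          obtain ⟨k, rfl⟩ := hr2
          exact h k
        · rw [hBzero i j₁ hb, hBzero i j₂ hb]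
      exact ce.injective this
    have hBAv : AvoidsFam B (TFam ℓ r \ TFam ℓ 2) := by
      rintro F hF ⟨f, g, hfinj, hginj, hent⟩
      exact hAv F hF ⟨fun i => re (f i), fun j => ce (g j),
        fun a b hab => hfinj (re.injective hab),
        fun a b hab => hginj (ce.injective hab), hent⟩
    rcases Nat.lt_or_ge ℓ 2 with h2 | h2
    · have hℓ1 : ℓ = 1 := by omega
      subst hℓ1
      have := core_bound_one r hr mr t B hB1 hBr hBS hBAv
      have hC1 : 1 ≤ C := Nat.one_le_pow _ _ (by omega)
      omega
    · exact core_bound r ℓ hr h2 mr t B hB1 hBr hBS hBAv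
  calc n = (Finset.univ : Finset (Fin n)).card := by simp
  _ ≤ C * (Finset.univ.image Φ).card := Finset.card_le_mul_card_image _ _ hfiber
  _ ≤ C * 2 ^ m := by
      apply Nat.mul_le_mul_left
      calc (Finset.univ.image Φ).card ≤ Fintype.card (Fin m → Bool) := Finset.card_le_univ _
      _ = 2 ^ m := by simp
  _ = 2 ^ m * C := by ring
lemma simple_card_le (r m n : ℕ) (A : MatN m n) (hAr : RMat r A) (hS : SimpleM A) :
    n ≤ r ^ m := by
  have hinj : Function.Injective
      (fun j : Fin n => (fun i : Fin m => (⟨A i j, hAr i j⟩ : Fin r))) := by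
    intro j₁ j₂ h
    apply hS
    intro i
    have := congrFun h i
    simpa [Fin.ext_iff] using this
  calc n = Fintype.card (Fin n) := by simp
  _ ≤ Fintype.card (Fin m → Fin r) := Fintype.card_le_of_injective _ hinj
  _ = r ^ m := by simp

lemma avoid01 (r ℓ m n : ℕ) (hr : 3 ≤ r) (hℓ : 1 ≤ ℓ) (A : MatN m n)
    (h01 : ∀ i j, A i j < 2) : AvoidsFam A (TFam ℓ r \ TFam ℓ 2) := by
  rintro F ⟨hF1, hF2⟩ hcfg
  obtain ⟨a, b, ha, hb, hab, h | h⟩ := hF1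
  · subst h
    obtain ⟨f, g, hfinj, hginj, hent0⟩ := hcfg
    have hent : ∀ (i j : Fin ℓ), A (f i) (g j) = Imat ℓ a b i j := hent0
    have haval : a < 2 := by
      have h1 := hent ⟨0, by omega⟩ ⟨0, by omega⟩
      rw [Imat, if_pos rfl] at h1
      rw [← h1]; exact h01 _ _
    rcases Nat.lt_or_ge ℓ 2 with h2 | h2
    · have hℓ1 : ℓ = 1 := by omega
      subst hℓ1
      refine hF2 ⟨a, 1 - a, by omega, by omega, by omega, Or.inl ?_⟩
      have he : Imat 1 a b = Imat 1 a (1 - a) := by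
        funext i j
        rw [Imat, Imat, if_pos (Subsingleton.elim i j), if_pos (Subsingleton.elim i j)]
      rw [he]
    · have hbval : b < 2 := by
        have h1 := hent ⟨0, by omega⟩ ⟨1, by omega⟩
        rw [Imat, if_neg (by rw [Fin.ext_iff]; simp)] at h1
        rw [← h1]; exact h01 _ _
      exact hF2 ⟨a, b, haval, hbval, hab, Or.inl rfl⟩
  · subst h
    obtain ⟨f, g, hfinj, hginj, hent0⟩ := hcfg
    have hent : ∀ (i j : Fin ℓ), A (f i) (g j) = Tmat ℓ a b i j := hent0
    have hbval : b < 2 := by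
      have h1 := hent ⟨0, by omega⟩ ⟨0, by omega⟩
      rw [Tmat, if_neg (by omega)] at h1
      rw [← h1]; exact h01 _ _
    rcases Nat.lt_or_ge ℓ 2 with h2 | h2
    · have hℓ1 : ℓ = 1 := by omega
      subst hℓ1
      refine hF2 ⟨1 - b, b, by omega, by omega, by omega, Or.inr ?_⟩
      have he : Tmat 1 a b = Tmat 1 (1 - b) b := by
        funext i j
        rw [Tmat, Tmat, if_neg (by omega), if_neg (by omega)]
      rw [he]
    · have haval : a < 2 := by
        have h1 := hent ⟨1, by omega⟩ ⟨0, by omega⟩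
        rw [Tmat, if_pos (by simp)] at h1
        rw [← h1]; exact h01 _ _
      exact hF2 ⟨a, b, haval, hbval, hab, Or.inr rfl⟩

theorem stmt0' (r ℓ : ℕ) (hr : 3 ≤ r) (hℓ : 1 ≤ ℓ) :
    (∀ m : ℕ, 1 ≤ m → 2 ^ m ≤ forb m r (TFam ℓ r \ TFam ℓ 2)) ∧
    ∃ c : ℕ, ∀ m : ℕ, 1 ≤ m → forb m r (TFam ℓ r \ TFam ℓ 2) ≤ c * 2 ^ m := by
  constructor
  · intro m hm
    set Alow : MatN m (2 ^ m) := fun i j => (j : ℕ) / 2 ^ (i : ℕ) % 2 with hAlow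
    have hR : RMat r Alow := by
      intro i j
      have : (j : ℕ) / 2 ^ (i : ℕ) % 2 < 2 := Nat.mod_lt _ (by omega)
      show (j : ℕ) / 2 ^ (i : ℕ) % 2 < r
      omega
    have h01 : ∀ i j, Alow i j < 2 := fun i j => Nat.mod_lt _ (by omega)
    have hSi : SimpleM Alow := by
      intro j₁ j₂ h
      apply Fin.ext
      apply Nat.eq_of_testBit_eq
      intro i
      rcases Nat.lt_or_ge i m with hi | hi
      · have hh : (j₁ : ℕ) / 2 ^ i % 2 = (j₂ : ℕ) / 2 ^ i % 2 := h ⟨i, hi⟩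
        simp [Nat.testBit_eq_decide_div_mod_eq, hh]
      · rw [Nat.testBit_lt_two_pow, Nat.testBit_lt_two_pow]
        · exact lt_of_lt_of_le j₂.isLt (Nat.pow_le_pow_right (by omega) hi)
        · exact lt_of_lt_of_le j₁.isLt (Nat.pow_le_pow_right (by omega) hi)
    have hmem : 2 ^ m ∈ { n : ℕ | ∃ A : MatN m n, RMat r A ∧ SimpleM A ∧
        AvoidsFam A (TFam ℓ r \ TFam ℓ 2) } :=
      ⟨Alow, hR, hSi, avoid01 r ℓ m (2 ^ m) hr hℓ Alow h01⟩
    have hbdd : BddAbove { n : ℕ | ∃ A : MatN m n, RMat r A ∧ SimpleM A ∧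
        AvoidsFam A (TFam ℓ r \ TFam ℓ 2) } := by
      refine ⟨r ^ m, fun k hk => ?_⟩
      obtain ⟨A, h1, h2, h3⟩ := hk
      exact simple_card_le r m k A h1 h2
    exact le_csSup hbdd hmem
  · refine ⟨r ^ (r ^ 2 * r ^ (r * (2 * ℓ))), fun m hm => ?_⟩
    apply csSup_le
    · refine ⟨0, (fun i j => j.elim0 : MatN m 0), fun i j => j.elim0, fun j => j.elim0, ?_⟩
      rintro F ⟨hF1, -⟩ ⟨f, g, -, -, -⟩
      obtain ⟨a, b, -, -, -, h | h⟩ := hF1 <;> subst h <;>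
        · have g' : Fin ℓ → Fin 0 := g
          exact (g' ⟨0, by omega⟩).elim0
    · rintro k ⟨A, h1, h2, h3⟩
      calc k ≤ 2 ^ m * r ^ (r ^ 2 * r ^ (r * (2 * ℓ))) :=
            fiber_bound r ℓ hr hℓ m k A h1 h2 h3
      _ = r ^ (r ^ 2 * r ^ (r * (2 * ℓ))) * 2 ^ m := by ring

/-- For `r ≥ 3`, `ℓ ≥ 1`, `forb(m, r, 𝒯_ℓ(r) \ 𝒯_ℓ(2))` is `Θ(2^m)`. -/
theorem stmt0 (r ℓ : ℕ) (hr : 3 ≤ r) (hℓ : 1 ≤ ℓ) :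
    (∀ m : ℕ, 1 ≤ m → 2 ^ m ≤ forb m r (TFam ℓ r \ TFam ℓ 2)) ∧
    ∃ c : ℕ, ∀ m : ℕ, 1 ≤ m → forb m r (TFam ℓ r \ TFam ℓ 2) ≤ c * 2 ^ m := by
  exact stmt0' r ℓ hr hℓ
end

section
/- Let r > 2 and ℓ ≥ 1 be given. Then there exist an integer ℓ′ ≥ 1 and a constant c, both depending only on r and ℓ, such that for every (0,1)-matrix F and every m ≥ 1, forb(m, r, (𝒯_ℓ(r) \ 𝒯_ℓ(2)) ∪ {F}) ≤ c · forb(m, 3, (𝒯_{ℓ′}(3) \ 𝒯_{ℓ′}(2)) ∪ {F}). -/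
-- §1 basics ------------------------------------------------------------

lemma isConfig_trans {k p m n M N : ℕ} {F : MatN k p} {B : MatN m n} {A : MatN M N}
    (h1 : IsConfig F B) (h2 : IsConfig B A) : IsConfig F A := by
  obtain ⟨f1, g1, hf1, hg1, he1⟩ := h1
  obtain ⟨f2, g2, hf2, hg2, he2⟩ := h2
  exact ⟨f2 ∘ f1, g2 ∘ g1, hf2.comp hf1, hg2.comp hg1,
    fun i j => by simp [Function.comp, he2, he1]⟩

lemma simple_card_bound {r m n : ℕ} (hr : 0 < r) {A : MatN m n}
    (hA : RMat r A) (hS : SimpleM A) : n ≤ r ^ m := by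
  have : Function.Injective (fun j : Fin n => (fun i : Fin m => (⟨A i j, hA i j⟩ : Fin r))) := by
    intro j1 j2 h
    apply hS
    intro i
    have := congrFun h i
    exact congrArg Fin.val this
  calc n = Fintype.card (Fin n) := (Fintype.card_fin n).symm
    _ ≤ Fintype.card (Fin m → Fin r) := Fintype.card_le_of_injective _ this
    _ = r ^ m := by simp

lemma nat_sSup_le {S : Set ℕ} {B : ℕ} (h : ∀ n ∈ S, n ≤ B) : sSup S ≤ B := by
  rcases S.eq_empty_or_nonempty with hS | hS
  · simp [hS]
  · exact csSup_le hS h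

lemma forb_set_bdd (m r : ℕ) (𝓕 : Set CMat) (hr : 0 < r) :
    BddAbove { n : ℕ | ∃ A : MatN m n, RMat r A ∧ SimpleM A ∧ AvoidsFam A 𝓕 } := by
  refine ⟨r ^ m, fun n hn => ?_⟩
  obtain ⟨A, h1, h2, _⟩ := hn
  exact simple_card_bound hr h1 h2

lemma le_forb {m r n : ℕ} (hr : 0 < r) {𝓕 : Set CMat} (A : MatN m n)
    (h1 : RMat r A) (h2 : SimpleM A) (h3 : AvoidsFam A 𝓕) : n ≤ forb m r 𝓕 :=
  le_csSup (forb_set_bdd m r 𝓕 hr) ⟨A, h1, h2, h3⟩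

lemma forb_le {m r : ℕ} {𝓕 : Set CMat} {B : ℕ}
    (h : ∀ n, ∀ A : MatN m n, RMat r A → SimpleM A → AvoidsFam A 𝓕 → n ≤ B) :
    forb m r 𝓕 ≤ B :=
  nat_sSup_le (fun n hn => by obtain ⟨A, h1, h2, h3⟩ := hn; exact h n A h1 h2 h3)

-- §2 sorted extraction --------------------------------------------------

lemma exists_strictMono_of_card {α : Type*} [LinearOrder α] {S : Finset α} {k : ℕ}
    (h : k ≤ S.card) : ∃ s : Fin k → α, StrictMono s ∧ ∀ i, s i ∈ S := by
  obtain ⟨T, hTS, hT⟩ := Finset.exists_subset_card_eq h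
  exact ⟨T.orderEmbOfFin hT, (T.orderEmbOfFin hT).strictMono,
    fun i => hTS (T.orderEmbOfFin_mem hT i)⟩

-- §3 pigeonhole for two-valued functions ---------------------------------

lemma two_val_pigeon {q k x y : ℕ} (v : Fin q → ℕ) (hv : ∀ i, v i = x ∨ v i = y)
    (hq : k + k ≤ q) :
    ∃ z, (z = x ∨ z = y) ∧ ∃ s : Fin k → Fin q, StrictMono s ∧ ∀ i, v (s i) = z := by
  classical
  set Sx := Finset.univ.filter (fun i : Fin q => v i = x) with hSx
  set Sy := Finset.univ.filter (fun i : Fin q => v i = y) with hSy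
  have hcover : q ≤ Sx.card + Sy.card := by
    have : (Finset.univ : Finset (Fin q)) ⊆ Sx ∪ Sy := by
      intro i _
      rcases hv i with h | h
      · exact Finset.mem_union_left _ (by simp [hSx, h])
      · exact Finset.mem_union_right _ (by simp [hSy, h])
    calc q = (Finset.univ : Finset (Fin q)).card := by simp
      _ ≤ (Sx ∪ Sy).card := Finset.card_le_card this
      _ ≤ Sx.card + Sy.card := Finset.card_union_le _ _
  rcases le_or_gt k Sx.card with hx | hx
  · obtain ⟨s, hs, hmem⟩ := exists_strictMono_of_card hx
    exact ⟨x, Or.inl rfl, s, hs, fun i => by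
      have := hmem i; simp [hSx] at this; exact this⟩
  · have hy : k ≤ Sy.card := by omega
    obtain ⟨s, hs, hmem⟩ := exists_strictMono_of_card hy
    exact ⟨y, Or.inr rfl, s, hs, fun i => by
      have := hmem i; simp [hSy] at this; exact this⟩

-- §4 Ramsey -------------------------------------------------------------

/-- tower function for the greedy pre-monochromatic sequence -/
def rg (c : ℕ) : ℕ → ℕ
  | 0 => 0
  | t + 1 => c * rg c t + 1

lemma ramsey_core {c : ℕ} (hc : 0 < c) :
    ∀ (t : ℕ) {α : Type} [LinearOrder α] (col : α → α → Fin c) (S : Finset α),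
      rg c t ≤ S.card →
      ∃ (x : Fin t → α) (a : Fin t → Fin c), StrictMono x ∧ (∀ i, x i ∈ S) ∧
        ∀ i j : Fin t, i < j → col (x i) (x j) = a i := by
  intro t
  induction t with
  | zero =>
    intro α _ col S _
    exact ⟨Fin.elim0, Fin.elim0, fun i => i.elim0, fun i => i.elim0, fun i => i.elim0⟩
  | succ t ih =>
    intro α _ col S hS
    classical
    have hne : S.Nonempty := by
      rw [← Finset.card_pos]
      have : 0 < rg c (t+1) := by
        rw [show rg c (t+1) = c * rg c t + 1 from rfl]; omega
      omega
    set x0 := S.min' hne with hx0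
    set S' := S.erase x0 with hS'
    have hS'card : c * rg c t ≤ S'.card := by
      have := Finset.card_erase_of_mem (S.min'_mem hne)
      rw [hS', this]
      have : rg c (t+1) = c * rg c t + 1 := rfl
      omega
    obtain ⟨b, _, hb⟩ := Finset.exists_le_card_fiber_of_mul_le_card_of_maps_to
      (f := fun z => col x0 z) (t := Finset.univ) (fun a _ => Finset.mem_univ _)
      ⟨⟨0, hc⟩, Finset.mem_univ _⟩ (by simpa using hS'card)
    set Sb := S'.filter (fun z => col x0 z = b) with hSb
    obtain ⟨xs, as, hxs, hmem, hcol⟩ := ih col Sb hb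
    have hmem' : ∀ i, xs i ∈ S' ∧ col x0 (xs i) = b := by
      intro i
      have := hmem i
      rw [hSb, Finset.mem_filter] at this
      exact this
    have hgt : ∀ i, x0 < xs i := by
      intro i
      have h1 := (hmem' i).1
      have h2 : xs i ∈ S := Finset.mem_of_mem_erase h1
      have h3 : xs i ≠ x0 := Finset.ne_of_mem_erase h1
      exact lt_of_le_of_ne (S.min'_le _ h2) (Ne.symm h3)
    refine ⟨Fin.cons x0 xs, Fin.cons b as, ?_, ?_, ?_⟩
    · rw [Fin.strictMono_iff_lt_succ]
      intro i
      rcases i with ⟨iv, hiv⟩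
      rw [Fin.cons_succ]
      cases iv with
      | zero =>
        have h0 : (Fin.castSucc ⟨0, hiv⟩ : Fin (t+1)) = 0 := rfl
        rw [h0, Fin.cons_zero]
        exact hgt _
      | succ v =>
        have hv : v < t := by omega
        have h0 : (Fin.castSucc ⟨v+1, hiv⟩ : Fin (t+1)) = Fin.succ ⟨v, hv⟩ := rfl
        rw [h0, Fin.cons_succ]
        exact hxs (Fin.mk_lt_mk.mpr (Nat.lt_succ_self v))
    · intro i
      rcases Fin.eq_zero_or_eq_succ i with rfl | ⟨i', rfl⟩
      · rw [Fin.cons_zero]; exact S.min'_mem hne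
      · rw [Fin.cons_succ]
        exact Finset.mem_of_mem_erase (hmem' i').1
    · intro i j hij
      rcases Fin.eq_zero_or_eq_succ i with rfl | ⟨i', rfl⟩
      · rcases Fin.eq_zero_or_eq_succ j with rfl | ⟨j', rfl⟩
        · exact absurd hij (lt_irrefl _)
        · rw [Fin.cons_zero, Fin.cons_succ, Fin.cons_zero]
          exact (hmem' j').2
      · rcases Fin.eq_zero_or_eq_succ j with rfl | ⟨j', rfl⟩
        · exact absurd hij (by
            intro h
            have := h.trans_le (Fin.zero_le i'.succ)
            exact absurd this (lt_irrefl _))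
        · rw [Fin.cons_succ, Fin.cons_succ, Fin.cons_succ]
          exact hcol i' j' (Fin.succ_lt_succ_iff.mp hij)

/-- Multicolour Ramsey for ordered pairs. -/
lemma ramsey (c k : ℕ) (hc : 0 < c) :
    ∃ R : ℕ, ∀ {α : Type} [LinearOrder α] (col : α → α → Fin c) (S : Finset α),
      R ≤ S.card →
      ∃ s : Fin k → α, StrictMono s ∧ (∀ i, s i ∈ S) ∧
        ∃ a : Fin c, ∀ i j : Fin k, i < j → col (s i) (s j) = a := by
  refine ⟨rg c (c * k), ?_⟩
  intro α _ col S hS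
  classical
  obtain ⟨x, a, hx, hxS, hcol⟩ := ramsey_core hc (c * k) col S hS
  obtain ⟨b, _, hb⟩ := Finset.exists_le_card_fiber_of_mul_le_card_of_maps_to
    (f := a) (s := Finset.univ) (t := Finset.univ) (n := k) (fun z _ => Finset.mem_univ _)
    ⟨⟨0, hc⟩, Finset.mem_univ _⟩ (by simp)
  obtain ⟨s', hs', hmem'⟩ := exists_strictMono_of_card hb
  refine ⟨fun i => x (s' i), hx.comp hs', fun i => hxS _, b, ?_⟩
  intro i j hij
  have hsb : a (s' i) = b := by
    have := hmem' i
    simp only [Finset.mem_filter] at this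
    exact this.2
  rw [hcol _ _ (hs' hij), hsb]
-- §5 Balogh–Bollobás-type bound ------------------------------------------

lemma tower {m n u v : ℕ} (huv : u ≠ v) (A : MatN m n) (hval : ∀ i j, A i j = u ∨ A i j = v)
    (hS : SimpleM A) :
    ∀ (t : ℕ) (C : Finset (Fin n)), 2 ^ t ≤ C.card →
      ∃ (r : Fin t → Fin m) (w : Fin t → Fin n) (ε : Fin t → ℕ),
        (∀ i, w i ∈ C) ∧ (∀ i, ε i = u ∨ ε i = v) ∧
        (∀ i j, i < j → A (r i) (w j) = ε i) ∧ (∀ i, A (r i) (w i) ≠ ε i) := by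
  intro t
  induction t with
  | zero =>
    intro C _
    exact ⟨Fin.elim0, Fin.elim0, Fin.elim0, fun i => i.elim0, fun i => i.elim0,
      fun i => i.elim0, fun i => i.elim0⟩
  | succ t ih =>
    intro C hC
    classical
    have h2 : 1 < C.card := by
      have : (2:ℕ) ≤ 2 ^ (t+1) := by
        have := Nat.one_le_two_pow (n := t)
        calc (2:ℕ) = 2 * 1 := by ring
          _ ≤ 2 * 2 ^ t := by omega
          _ = 2 ^ (t+1) := by ring
      omega
    obtain ⟨p, hp, q, hq, hpq⟩ := Finset.one_lt_card.mp h2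
    have hdiff : ∃ ρ : Fin m, A ρ p ≠ A ρ q := by
      by_contra h
      push_neg at h
      exact hpq (hS p q h)
    obtain ⟨ρ, hρ⟩ := hdiff
    set Cu := C.filter (fun z => A ρ z = u) with hCu
    set Cv := C.filter (fun z => A ρ z = v) with hCv
    have hcover : C.card ≤ Cu.card + Cv.card := by
      have hsub : C ⊆ Cu ∪ Cv := by
        intro z hz
        rcases hval ρ z with h | h
        · exact Finset.mem_union_left _ (Finset.mem_filter.mpr ⟨hz, h⟩)
        · exact Finset.mem_union_right _ (Finset.mem_filter.mpr ⟨hz, h⟩)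
      calc C.card ≤ (Cu ∪ Cv).card := Finset.card_le_card hsub
        _ ≤ _ := Finset.card_union_le _ _
    -- both parts are nonempty
    have hboth : Cu.Nonempty ∧ Cv.Nonempty := by
      rcases hval ρ p with h1 | h1 <;> rcases hval ρ q with h2 | h2
      · exact absurd (h1.trans h2.symm) hρ
      · exact ⟨⟨p, Finset.mem_filter.mpr ⟨hp, h1⟩⟩, ⟨q, Finset.mem_filter.mpr ⟨hq, h2⟩⟩⟩
      · exact ⟨⟨q, Finset.mem_filter.mpr ⟨hq, h2⟩⟩, ⟨p, Finset.mem_filter.mpr ⟨hp, h1⟩⟩⟩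
      · exact absurd (h1.trans h2.symm) hρ
    have hmain : ∃ (L : Finset (Fin n)) (w0 : Fin n) (e0 : ℕ),
        (e0 = u ∨ e0 = v) ∧ 2 ^ t ≤ L.card ∧ L ⊆ C ∧ w0 ∈ C ∧
        (∀ z ∈ L, A ρ z = e0) ∧ A ρ w0 ≠ e0 := by
      rcases le_or_gt (2 ^ t) Cu.card with h | h
      · obtain ⟨w0, hw0⟩ := hboth.2
        have := Finset.mem_filter.mp hw0
        refine ⟨Cu, w0, u, Or.inl rfl, h, Finset.filter_subset _ _, this.1,
          fun z hz => (Finset.mem_filter.mp hz).2, ?_⟩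
        rw [this.2]; exact Ne.symm huv
      · obtain ⟨w0, hw0⟩ := hboth.1
        have := Finset.mem_filter.mp hw0
        have hv2 : 2 ^ t ≤ Cv.card := by
          have : 2 ^ (t+1) = 2 ^ t + 2 ^ t := by ring
          omega
        refine ⟨Cv, w0, v, Or.inr rfl, hv2, Finset.filter_subset _ _, this.1,
          fun z hz => (Finset.mem_filter.mp hz).2, ?_⟩
        rw [this.2]; exact huv
    obtain ⟨L, w0, e0, he0, hL, hLC, hw0C, hLval, hw0val⟩ := hmain
    obtain ⟨r', w', ε', hw'mem, hε', hcol', hdiag'⟩ := ih L hL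
    refine ⟨Fin.cons ρ r', Fin.cons w0 w', Fin.cons e0 ε', ?_, ?_, ?_, ?_⟩
    · intro i
      rcases Fin.eq_zero_or_eq_succ i with rfl | ⟨i', rfl⟩
      · rw [Fin.cons_zero]; exact hw0C
      · rw [Fin.cons_succ]; exact hLC (hw'mem i')
    · intro i
      rcases Fin.eq_zero_or_eq_succ i with rfl | ⟨i', rfl⟩
      · rw [Fin.cons_zero]; exact he0
      · rw [Fin.cons_succ]; exact hε' i'
    · intro i j hij
      rcases Fin.eq_zero_or_eq_succ i with rfl | ⟨i', rfl⟩
      · rcases Fin.eq_zero_or_eq_succ j with rfl | ⟨j', rfl⟩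
        · exact absurd hij (lt_irrefl _)
        · rw [Fin.cons_zero, Fin.cons_succ, Fin.cons_zero]
          exact hLval _ (hw'mem j')
      · rcases Fin.eq_zero_or_eq_succ j with rfl | ⟨j', rfl⟩
        · exact absurd hij (by
            intro h
            have := h.trans_le (Fin.zero_le i'.succ)
            exact absurd this (lt_irrefl _))
        · rw [Fin.cons_succ, Fin.cons_succ, Fin.cons_succ]
          exact hcol' i' j' (Fin.succ_lt_succ_iff.mp hij)
    · intro i
      rcases Fin.eq_zero_or_eq_succ i with rfl | ⟨i', rfl⟩
      · rw [Fin.cons_zero, Fin.cons_zero]; exact hw0val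
      · rw [Fin.cons_succ, Fin.cons_succ]; exact hdiag' i'
lemma dec2 {u v x y : ℕ} (hx : x = u ∨ x = v) (hy : y = u ∨ y = v)
    (h : (if x = u then (0:Fin 2) else 1) = (if y = u then 0 else 1)) : x = y := by
  by_cases hxu : x = u <;> by_cases hyu : y = u <;>
    simp [hxu, hyu] at h ⊢ <;> omega

lemma bb (ℓ u v : ℕ) (hℓ : 1 ≤ ℓ) (huv : u ≠ v) :
    ∃ C : ℕ, ∀ (m n : ℕ) (A : MatN m n), (∀ i j, A i j = u ∨ A i j = v) → SimpleM A →
      ¬ IsConfig (Imat ℓ u v) A → ¬ IsConfig (Imat ℓ v u) A →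
      ¬ IsConfig (Tmat ℓ u v) A → ¬ IsConfig (Tmat ℓ v u) A → n ≤ C := by
  classical
  obtain ⟨R2, hR2⟩ := ramsey 2 (ℓ+1) (by omega)
  refine ⟨2 ^ (R2 + R2 + 1), ?_⟩
  intro m n A hval hS hI1 hI2 hT1 hT2
  by_contra hn
  push_neg at hn
  obtain ⟨r, w, ε, hwmem, hε, hcol, hdiag⟩ := tower huv A hval hS (R2 + R2 + 1) Finset.univ
    (by rw [Finset.card_univ, Fintype.card_fin]; exact hn.le)
  -- injectivity of w
  have wInj : Function.Injective w := by
    intro i j hij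
    by_contra hne
    rcases lt_or_gt_of_ne hne with h | h
    · have h1 := hcol i j h
      have h2 := hdiag i
      rw [hij] at h2
      exact h2 h1
    · have h1 := hcol j i h
      have h2 := hdiag j
      rw [← hij] at h2
      exact h2 h1
  -- injectivity of r on indices below T
  have rInj : ∀ i j : Fin (R2+R2+1), i < j → (j:ℕ) < R2+R2 → r i ≠ r j := by
    intro i j hij hjT hreq
    have hK : j < Fin.last (R2+R2) := by
      rw [Fin.lt_def, Fin.val_last]; exact hjT
    have e1 : A (r i) (w (Fin.last (R2+R2))) = ε i := hcol i _ (hij.trans hK)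
    have e2 : A (r j) (w (Fin.last (R2+R2))) = ε j := hcol j _ hK
    have eε : ε i = ε j := by rw [← e1, ← e2, hreq]
    have e3 : A (r i) (w j) = ε i := hcol i j hij
    have e4 : A (r j) (w j) ≠ ε j := hdiag j
    rw [← hreq, e3, eε] at e4
    exact e4 rfl
  -- pigeonhole on ε over the first T indices
  obtain ⟨e, he, s, hsmono, hsval⟩ := two_val_pigeon (x := u) (y := v)
    (fun i : Fin (R2+R2) => ε (Fin.castSucc i)) (fun i => hε _) (le_refl (R2 + R2))
  -- Ramsey on the below-diagonal entries
  obtain ⟨σ, hσmono, _, a, hamono⟩ := hR2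
    (fun i j : Fin R2 => if A (r (Fin.castSucc (s j))) (w (Fin.castSucc (s i))) = u
      then (0:Fin 2) else 1)
    Finset.univ (by simp)
  set τ : Fin (ℓ+1) → Fin (R2+R2+1) := fun i => Fin.castSucc (s (σ i)) with hτ
  have τmono : StrictMono τ := by
    intro i j hij
    exact Fin.castSucc_lt_castSucc_iff.mpr (hsmono (hσmono hij))
  have τlt : ∀ z, ((τ z) : ℕ) < R2+R2 := fun z => (s (σ z)).isLt
  have i0 : Fin (ℓ+1) := ⟨0, by omega⟩
  have i1 : Fin (ℓ+1) := ⟨1, by omega⟩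
  have h01 : (⟨0, by omega⟩ : Fin (ℓ+1)) < ⟨1, by omega⟩ := Fin.mk_lt_mk.mpr (by omega)
  set d := A (r (τ ⟨1, by omega⟩)) (w (τ ⟨0, by omega⟩)) with hd
  have hbelow : ∀ i j : Fin (ℓ+1), i < j → A (r (τ j)) (w (τ i)) = d := by
    intro i j hij
    have h1 := hamono i j hij
    have h2 := hamono ⟨0, by omega⟩ ⟨1, by omega⟩ h01
    rw [hd]
    exact dec2 (hval _ _) (hval _ _) (h1.trans h2.symm)
  have habove : ∀ i j : Fin (ℓ+1), i < j → A (r (τ i)) (w (τ j)) = e := by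
    intro i j hij
    have := hcol (τ i) (τ j) (τmono hij)
    rw [this]
    exact hsval (σ i)
  -- the diagonal value
  set e' := if e = u then v else u with he'
  have hee' : (e = u ∧ e' = v) ∨ (e = v ∧ e' = u) := by
    rcases he with h | h
    · left; exact ⟨h, by rw [he', if_pos h]⟩
    · right
      refine ⟨h, ?_⟩
      rw [he']
      by_cases h2 : e = u
      · rw [if_pos h2]; rw [h2] at h; exact h.symm
      · rw [if_neg h2]
  have hene' : e ≠ e' := by
    rcases hee' with ⟨h1, h2⟩ | ⟨h1, h2⟩ <;> rw [h1, h2]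
    · exact huv
    · exact Ne.symm huv
  have hdiagval : ∀ i : Fin (ℓ+1), A (r (τ i)) (w (τ i)) = e' := by
    intro i
    have h1 := hdiag (τ i)
    have h2 : ε (τ i) = e := hsval (σ i)
    rw [h2] at h1
    rcases hval (r (τ i)) (w (τ i)) with h | h <;>
      rcases hee' with ⟨g1, g2⟩ | ⟨g1, g2⟩ <;> rw [h] <;> omega
  have hd2 : d = e ∨ d = e' := by
    rcases hval (r (τ ⟨1, by omega⟩)) (w (τ ⟨0, by omega⟩)) with h | h <;>
      rcases hee' with ⟨g1, g2⟩ | ⟨g1, g2⟩ <;> rw [hd] <;> omega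
  -- injectivity helpers
  have rτInj : ∀ i j : Fin (ℓ+1), i ≠ j → r (τ i) ≠ r (τ j) := by
    intro i j hne
    rcases lt_or_gt_of_ne hne with h | h
    · exact rInj _ _ (τmono h) (τlt j)
    · intro hh; exact (rInj _ _ (τmono h) (τlt i)) hh.symm
  have wτInj : ∀ i j : Fin (ℓ+1), i ≠ j → w (τ i) ≠ w (τ j) := by
    intro i j hne hh
    exact hne (τmono.injective (wInj hh))
  rcases hd2 with hcase | hcase
  · -- d = e : Imat ℓ e' e
    have hconf : IsConfig (Imat ℓ e' e) A := by
      refine ⟨fun x => r (τ (Fin.castSucc x)), fun y => w (τ (Fin.castSucc y)), ?_, ?_, ?_⟩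
      · intro x y hxy
        by_contra hne
        exact rτInj _ _ (fun hh => hne (Fin.castSucc_injective _ hh)) hxy
      · intro x y hxy
        by_contra hne
        exact wτInj _ _ (fun hh => hne (Fin.castSucc_injective _ hh)) hxy
      · intro x y
        show A (r (τ (Fin.castSucc x))) (w (τ (Fin.castSucc y))) = Imat ℓ e' e x y
        rw [Imat]
        by_cases hxy : x = y
        · rw [if_pos hxy, hxy]
          exact hdiagval _
        · rw [if_neg hxy]
          rcases lt_or_gt_of_ne hxy with h | h
          · exact habove _ _ (Fin.castSucc_lt_castSucc_iff.mpr h)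
          · rw [hbelow _ _ (Fin.castSucc_lt_castSucc_iff.mpr h), hcase]
    rcases hee' with ⟨g1, g2⟩ | ⟨g1, g2⟩
    · rw [g1, g2] at hconf; exact hI2 hconf
    · rw [g1, g2] at hconf; exact hI1 hconf
  · -- d = e' : Tmat ℓ e' e
    have hconf : IsConfig (Tmat ℓ e' e) A := by
      refine ⟨fun x => r (τ (Fin.castSucc x)), fun y => w (τ (Fin.succ y)), ?_, ?_, ?_⟩
      · intro x y hxy
        by_contra hne
        exact rτInj _ _ (fun hh => hne (Fin.castSucc_injective _ hh)) hxy
      · intro x y hxy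
        by_contra hne
        exact wτInj _ _ (fun hh => hne (Fin.succ_injective _ hh)) hxy
      · intro x y
        show A (r (τ (Fin.castSucc x))) (w (τ (Fin.succ y))) = Tmat ℓ e' e x y
        rw [Tmat]
        by_cases hxy : (y:ℕ) < (x:ℕ)
        · rw [if_pos hxy]
          rcases Nat.lt_or_ge ((y:ℕ)+1) (x:ℕ) with h | h
          · have : Fin.succ y < Fin.castSucc x := by
              rw [Fin.lt_def]
              simpa using h
            rw [hbelow _ _ this, hcase]
          · have hxe : (x:ℕ) = (y:ℕ)+1 := by omega
            have : Fin.castSucc x = Fin.succ y := by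
              apply Fin.ext
              simpa using hxe
            rw [this]
            exact hdiagval _
        · rw [if_neg hxy]
          have : Fin.castSucc x < Fin.succ y := by
            rw [Fin.lt_def]
            simp
            omega
          exact habove _ _ this
    rcases hee' with ⟨g1, g2⟩ | ⟨g1, g2⟩
    · rw [g1, g2] at hconf; exact hT2 hconf
    · rw [g1, g2] at hconf; exact hT1 hconf
-- §6 membership lemmas and decoders --------------------------------------

lemma not_in_tfam2 {ℓ : ℕ} (X : MatN ℓ ℓ) (h : ∃ i j, 2 ≤ X i j) :
    (⟨ℓ, ℓ, X⟩ : CMat) ∉ TFam ℓ 2 := by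
  rintro ⟨a, b, ha, hb, hab, h' | h'⟩ <;>
  · obtain ⟨i, j, hij⟩ := h
    simp only [CMat.mk.injEq, heq_eq_eq, true_and] at h'
    subst h'
    simp only [Imat, Tmat] at hij
    split_ifs at hij <;> omega

lemma Imat_mem_DFam {ℓ r a b : ℕ} (hℓ : 2 ≤ ℓ) (ha : a < r) (hb : b < r)
    (hab : a ≠ b) (h2 : 2 ≤ a ∨ 2 ≤ b) :
    (⟨ℓ, ℓ, Imat ℓ a b⟩ : CMat) ∈ TFam ℓ r \ TFam ℓ 2 := by
  refine ⟨⟨a, b, ha, hb, hab, Or.inl rfl⟩, not_in_tfam2 _ ?_⟩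
  rcases h2 with h2 | h2
  · exact ⟨⟨0, by omega⟩, ⟨0, by omega⟩, by simp [Imat]; omega⟩
  · refine ⟨⟨0, by omega⟩, ⟨1, by omega⟩, ?_⟩
    have : (⟨0, by omega⟩ : Fin ℓ) ≠ ⟨1, by omega⟩ := by
      intro hh
      have := Fin.mk.injEq .. ▸ hh
      simp at this
    simp [Imat, this]
    omega

lemma Tmat_mem_DFam {ℓ r a b : ℕ} (hℓ : 2 ≤ ℓ) (ha : a < r) (hb : b < r)
    (hab : a ≠ b) (h2 : 2 ≤ a ∨ 2 ≤ b) :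
    (⟨ℓ, ℓ, Tmat ℓ a b⟩ : CMat) ∈ TFam ℓ r \ TFam ℓ 2 := by
  refine ⟨⟨a, b, ha, hb, hab, Or.inr rfl⟩, not_in_tfam2 _ ?_⟩
  rcases h2 with h2 | h2
  · refine ⟨⟨1, by omega⟩, ⟨0, by omega⟩, ?_⟩
    simp [Tmat]
    omega
  · exact ⟨⟨0, by omega⟩, ⟨0, by omega⟩, by simp [Tmat]; omega⟩

lemma dec4 {s x y x' y' : ℕ} (hx : x = s ∨ x = s+1) (hy : y = s ∨ y = s+1)
    (hx' : x' = s ∨ x' = s+1) (hy' : y' = s ∨ y' = s+1)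
    (h : (if x = s then (if y = s then (0:Fin 4) else 1) else if y = s then 2 else 3)
       = (if x' = s then (if y' = s then (0:Fin 4) else 1) else if y' = s then 2 else 3)) :
    x = x' ∧ y = y' := by
  rcases hx with hx | hx <;> rcases hy with hy | hy <;>
    rcases hx' with hx' | hx' <;> rcases hy' with hy' | hy' <;>
    split_ifs at h <;>
    first
      | exact ⟨by omega, by omega⟩
      | exact absurd h (by decide)
      | omega
section lift

variable {m n s ℓ ℓ₂ : ℕ} {A : MatN m n}

lemma lift_I (hs : 2 ≤ s) (hℓ : 2 ≤ ℓ) (hA : RMat (s+2) A)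
    (hAv : ∀ M ∈ TFam ℓ (s+2) \ TFam ℓ 2, ¬ IsConfig M.mat A)
    (f : Fin ℓ₂ → Fin m) (g : Fin ℓ₂ → Fin n)
    (hf : Function.Injective f) (hg : Function.Injective g)
    {a b : ℕ} (ha : a < s+1) (hb : b < s+1) (hab : a ≠ b) (hnot2 : ¬(a < 2 ∧ b < 2))
    (hpig : ℓ + ℓ ≤ ℓ₂)
    (hRam4 : ∀ col : Fin ℓ₂ → Fin ℓ₂ → Fin 4, ∃ σ : Fin (2*ℓ+1) → Fin ℓ₂,
      StrictMono σ ∧ ∃ c0, ∀ i j, i < j → col (σ i) (σ j) = c0)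
    (hval : ∀ i j, min (A (f i) (g j)) s = Imat ℓ₂ a b i j) : False := by
  classical
  set B : Fin ℓ₂ → Fin ℓ₂ → ℕ := fun i j => A (f i) (g j) with hB
  have hBlt : ∀ i j, B i j < s + 2 := fun i j => hA _ _
  have hlt : ∀ i j (v : ℕ), v < s → min (B i j) s = v → B i j = v := by
    intro i j v h1 h2
    omega
  have hsv : ∀ i j, min (B i j) s = s → B i j = s ∨ B i j = s+1 := by
    intro i j h1
    have := hBlt i j
    omega
  have hcast : ℓ ≤ ℓ₂ := by omega
  have hdiagv : ∀ i, min (B i i) s = a := by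
    intro i
    have := hval i i
    simpa [Imat] using this
  have hoffv : ∀ i j, i ≠ j → min (B i j) s = b := by
    intro i j hij
    have := hval i j
    simpa [Imat, hij] using this
  by_cases hbs : b = s
  · -- off-diagonal entries collapsed
    have has : a < s := by omega
    obtain ⟨σ, hσ, c0, hc0⟩ := hRam4
      (fun i j => if B i j = s then (if B j i = s then 0 else 1)
        else if B j i = s then 2 else 3)
    have h01 : (⟨0, by omega⟩ : Fin (2*ℓ+1)) < ⟨1, by omega⟩ := Fin.mk_lt_mk.mpr (by omega)
    set x := B (σ ⟨0, by omega⟩) (σ ⟨1, by omega⟩) with hx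
    set y := B (σ ⟨1, by omega⟩) (σ ⟨0, by omega⟩) with hy
    have hmem : ∀ i j : Fin (2*ℓ+1), i < j →
        (B (σ i) (σ j) = s ∨ B (σ i) (σ j) = s+1) ∧
        (B (σ j) (σ i) = s ∨ B (σ j) (σ i) = s+1) := by
      intro i j hij
      have hne : σ i ≠ σ j := fun hh => absurd (hσ.injective hh) (Fin.ne_of_lt hij)
      exact ⟨hsv _ _ (by rw [hoffv _ _ hne, hbs]),
        hsv _ _ (by rw [hoffv _ _ (Ne.symm hne), hbs])⟩
    have hxv : x = s ∨ x = s+1 := (hmem _ _ h01).1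
    have hyv : y = s ∨ y = s+1 := (hmem _ _ h01).2
    have hx2 : 2 ≤ x := by rcases hxv with h | h <;> omega
    have hxs : s ≤ x := by rcases hxv with h | h <;> omega
    have hys : s ≤ y := by rcases hyv with h | h <;> omega
    have hxlt : x < s+2 := by rcases hxv with h | h <;> omega
    have hy2 : 2 ≤ y := by rcases hyv with h | h <;> omega
    have hylt : y < s+2 := by rcases hyv with h | h <;> omega
    have hdec : ∀ i j, i < j → B (σ i) (σ j) = x ∧ B (σ j) (σ i) = y := by
      intro i j hij
      have h1 := hc0 i j hij
      have h2 := hc0 _ _ h01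
      exact dec4 (hmem i j hij).1 (hmem i j hij).2 hxv hyv (h1.trans h2.symm)
    by_cases hxy : x = y
    · -- Imat ℓ a x
      have hcast2 : ℓ ≤ 2*ℓ+1 := by omega
      refine hAv _ (Imat_mem_DFam hℓ (show a < s+2 by omega) hxlt
        (show a ≠ x by omega) (Or.inr hx2)) ?_
      refine ⟨fun i => f (σ (Fin.castLE hcast2 i)), fun j => g (σ (Fin.castLE hcast2 j)),
        hf.comp (hσ.injective.comp (Fin.castLE_injective _)),
        hg.comp (hσ.injective.comp (Fin.castLE_injective _)), ?_⟩
      intro i j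
      show B (σ (Fin.castLE hcast2 i)) (σ (Fin.castLE hcast2 j)) = Imat ℓ a x i j
      rw [Imat]
      by_cases hij : i = j
      · rw [if_pos hij, hij]
        exact hlt _ _ a has (hdiagv _)
      · rw [if_neg hij]
        rcases lt_or_gt_of_ne hij with h | h
        · exact (hdec _ _ (Fin.strictMono_castLE hcast2 h)).1
        · rw [(hdec _ _ (Fin.strictMono_castLE hcast2 h)).2, hxy]
    · -- Tmat ℓ y x
      refine hAv _ (Tmat_mem_DFam hℓ hylt hxlt
        (Ne.symm hxy) (Or.inl hy2)) ?_
      have hsr : ∀ i : Fin ℓ, 2*(i:ℕ)+1 < 2*ℓ+1 := fun i => by have := i.isLt; omega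
      have hsc : ∀ j : Fin ℓ, 2*(j:ℕ)+2 < 2*ℓ+1 := fun j => by have := j.isLt; omega
      refine ⟨fun i => f (σ ⟨2*(i:ℕ)+1, hsr i⟩), fun j => g (σ ⟨2*(j:ℕ)+2, hsc j⟩),
        ?_, ?_, ?_⟩
      · intro i j hij
        have := hσ.injective (hf hij)
        have := Fin.mk.injEq .. ▸ this
        exact Fin.ext (by omega)
      · intro i j hij
        have := hσ.injective (hg hij)
        have := Fin.mk.injEq .. ▸ this
        exact Fin.ext (by omega)
      · intro i j
        show B (σ ⟨2*(i:ℕ)+1, hsr i⟩) (σ ⟨2*(j:ℕ)+2, hsc j⟩) = Tmat ℓ y x i j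
        rw [Tmat]
        by_cases hij : (j:ℕ) < (i:ℕ)
        · rw [if_pos hij]
          exact (hdec ⟨2*(j:ℕ)+2, hsc j⟩ ⟨2*(i:ℕ)+1, hsr i⟩ (Fin.mk_lt_mk.mpr (by omega))).2
        · rw [if_neg hij]
          exact (hdec ⟨2*(i:ℕ)+1, hsr i⟩ ⟨2*(j:ℕ)+2, hsc j⟩ (Fin.mk_lt_mk.mpr (by omega))).1
  · by_cases has : a = s
    · -- diagonal entries collapsed
      have hbs' : b < s := by omega
      obtain ⟨z, hz, σ, hσ, hσv⟩ := two_val_pigeon (x := s) (y := s+1)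
        (fun i => B i i) (fun i => hsv _ _ (by rw [hdiagv i, has])) hpig
      have hz2 : 2 ≤ z := by rcases hz with h | h <;> omega
      have hzs : s ≤ z := by rcases hz with h | h <;> omega
      have hzlt : z < s+2 := by rcases hz with h | h <;> omega
      refine hAv _ (Imat_mem_DFam hℓ hzlt (show b < s+2 by omega)
        (show z ≠ b by omega) (Or.inl hz2)) ?_
      refine ⟨fun i => f (σ i), fun j => g (σ j),
        hf.comp hσ.injective, hg.comp hσ.injective, ?_⟩
      intro i j
      show B (σ i) (σ j) = Imat ℓ z b i j
      rw [Imat]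
      by_cases hij : i = j
      · rw [if_pos hij, hij]
        exact hσv j
      · rw [if_neg hij]
        exact hlt _ _ b hbs' (hoffv _ _ (fun hh => hij (hσ.injective hh)))
    · -- both symbols exact
      have has' : a < s := by omega
      have hbs' : b < s := by omega
      refine hAv _ (Imat_mem_DFam hℓ (show a < s+2 by omega) (show b < s+2 by omega)
        hab (show 2 ≤ a ∨ 2 ≤ b by omega)) ?_
      refine ⟨fun i => f (Fin.castLE hcast i), fun j => g (Fin.castLE hcast j),
        hf.comp (Fin.castLE_injective _), hg.comp (Fin.castLE_injective _), ?_⟩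
      intro i j
      show B (Fin.castLE hcast i) (Fin.castLE hcast j) = Imat ℓ a b i j
      rw [Imat]
      by_cases hij : i = j
      · rw [if_pos hij, hij]
        exact hlt _ _ a has' (hdiagv _)
      · rw [if_neg hij]
        exact hlt _ _ b hbs' (hoffv _ _ (fun hh => hij (Fin.castLE_injective _ hh)))

end lift
section liftT

variable {m n s ℓ ℓ₂ : ℕ} {A : MatN m n}

lemma lift_T (hs : 2 ≤ s) (hℓ : 2 ≤ ℓ) (hA : RMat (s+2) A)
    (hAv : ∀ M ∈ TFam ℓ (s+2) \ TFam ℓ 2, ¬ IsConfig M.mat A)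
    (f : Fin ℓ₂ → Fin m) (g : Fin ℓ₂ → Fin n)
    (hf : Function.Injective f) (hg : Function.Injective g)
    {a b : ℕ} (ha : a < s+1) (hb : b < s+1) (hab : a ≠ b) (hnot2 : ¬(a < 2 ∧ b < 2))
    (hcast : ℓ ≤ ℓ₂)
    (hRam2a : ∀ col : Fin ℓ₂ → Fin ℓ₂ → Fin 2, ∃ σ : Fin (2*ℓ+1) → Fin ℓ₂,
      StrictMono σ ∧ ∃ c0, ∀ i j, i < j → col (σ i) (σ j) = c0)
    (hRam2b : ∀ col : Fin ℓ₂ → Fin ℓ₂ → Fin 2, ∃ σ : Fin ℓ → Fin ℓ₂,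
      StrictMono σ ∧ ∃ c0, ∀ i j, i < j → col (σ i) (σ j) = c0)
    (hval : ∀ i j, min (A (f i) (g j)) s = Tmat ℓ₂ a b i j) : False := by
  classical
  set B : Fin ℓ₂ → Fin ℓ₂ → ℕ := fun i j => A (f i) (g j) with hB
  have hBlt : ∀ i j, B i j < s + 2 := fun i j => hA _ _
  have hlt : ∀ i j (v : ℕ), v < s → min (B i j) s = v → B i j = v := by
    intro i j v h1 h2
    omega
  have hsv : ∀ i j, min (B i j) s = s → B i j = s ∨ B i j = s+1 := by
    intro i j h1
    have := hBlt i j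
    omega
  have hbelowv : ∀ i j : Fin ℓ₂, (j:ℕ) < (i:ℕ) → min (B i j) s = a := by
    intro i j hij
    have := hval i j
    rwa [Tmat, if_pos hij] at this
  have habovev : ∀ i j : Fin ℓ₂, ¬ ((j:ℕ) < (i:ℕ)) → min (B i j) s = b := by
    intro i j hij
    have := hval i j
    rwa [Tmat, if_neg hij] at this
  by_cases hbs : b = s
  · -- on/above-diagonal entries collapsed, a exact
    have has : a < s := by omega
    obtain ⟨σ, hσ, c0, hc0⟩ := hRam2a (fun i j => if B i j = s then 0 else 1)
    have h01 : (⟨0, by omega⟩ : Fin (2*ℓ+1)) < ⟨1, by omega⟩ := Fin.mk_lt_mk.mpr (by omega)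
    set x := B (σ ⟨0, by omega⟩) (σ ⟨1, by omega⟩) with hx
    have hmem : ∀ i j : Fin (2*ℓ+1), i < j →
        B (σ i) (σ j) = s ∨ B (σ i) (σ j) = s+1 := by
      intro i j hij
      refine hsv _ _ ?_
      rw [habovev _ _ (by
        have := hσ hij
        rw [Fin.lt_def] at this
        omega), hbs]
    have hxv : x = s ∨ x = s+1 := hmem _ _ h01
    have hx2 : 2 ≤ x := by rcases hxv with h | h <;> omega
    have hxs : s ≤ x := by rcases hxv with h | h <;> omega
    have hxlt : x < s+2 := by rcases hxv with h | h <;> omega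
    have hdec : ∀ i j, i < j → B (σ i) (σ j) = x := by
      intro i j hij
      have h1 := hc0 i j hij
      have h2 := hc0 _ _ h01
      exact dec2 (u := s) (v := s+1) (hmem i j hij) hxv (h1.trans h2.symm)
    refine hAv _ (Tmat_mem_DFam hℓ (show a < s+2 by omega) hxlt
      (show a ≠ x by omega) (Or.inr hx2)) ?_
    have hsr : ∀ i : Fin ℓ, 2*(i:ℕ)+1 < 2*ℓ+1 := fun i => by have := i.isLt; omega
    have hsc : ∀ j : Fin ℓ, 2*(j:ℕ)+2 < 2*ℓ+1 := fun j => by have := j.isLt; omega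
    refine ⟨fun i => f (σ ⟨2*(i:ℕ)+1, hsr i⟩), fun j => g (σ ⟨2*(j:ℕ)+2, hsc j⟩),
      ?_, ?_, ?_⟩
    · intro i j hij
      have := hσ.injective (hf hij)
      have := Fin.mk.injEq .. ▸ this
      exact Fin.ext (by omega)
    · intro i j hij
      have := hσ.injective (hg hij)
      have := Fin.mk.injEq .. ▸ this
      exact Fin.ext (by omega)
    · intro i j
      show B (σ ⟨2*(i:ℕ)+1, hsr i⟩) (σ ⟨2*(j:ℕ)+2, hsc j⟩) = Tmat ℓ a x i j
      rw [Tmat]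
      by_cases hij : (j:ℕ) < (i:ℕ)
      · rw [if_pos hij]
        refine hlt _ _ a has (hbelowv _ _ ?_)
        have := hσ (show (⟨2*(j:ℕ)+2, hsc j⟩ : Fin (2*ℓ+1)) < ⟨2*(i:ℕ)+1, hsr i⟩ from
          Fin.mk_lt_mk.mpr (by omega))
        rw [Fin.lt_def] at this
        omega
      · rw [if_neg hij]
        exact hdec _ _ (Fin.mk_lt_mk.mpr (by omega))
  · by_cases has : a = s
    · -- below-diagonal entries collapsed, b exact
      have hbs' : b < s := by omega
      obtain ⟨σ, hσ, c0, hc0⟩ := hRam2b (fun i j => if B j i = s then 0 else 1)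
      have h01 : (⟨0, by omega⟩ : Fin ℓ) < ⟨1, by omega⟩ := Fin.mk_lt_mk.mpr (by omega)
      set y := B (σ ⟨1, by omega⟩) (σ ⟨0, by omega⟩) with hy
      have hmem : ∀ i j : Fin ℓ, i < j →
          B (σ j) (σ i) = s ∨ B (σ j) (σ i) = s+1 := by
        intro i j hij
        refine hsv _ _ ?_
        rw [hbelowv _ _ (by
          have := hσ hij
          rw [Fin.lt_def] at this
          omega), has]
      have hyv : y = s ∨ y = s+1 := hmem _ _ h01
      have hy2 : 2 ≤ y := by rcases hyv with h | h <;> omega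
      have hys : s ≤ y := by rcases hyv with h | h <;> omega
      have hylt : y < s+2 := by rcases hyv with h | h <;> omega
      have hdec : ∀ i j, i < j → B (σ j) (σ i) = y := by
        intro i j hij
        have h1 := hc0 i j hij
        have h2 := hc0 _ _ h01
        exact dec2 (u := s) (v := s+1) (hmem i j hij) hyv (h1.trans h2.symm)
      refine hAv _ (Tmat_mem_DFam hℓ hylt (show b < s+2 by omega)
        (show y ≠ b by omega) (Or.inl hy2)) ?_
      refine ⟨fun i => f (σ i), fun j => g (σ j),
        hf.comp hσ.injective, hg.comp hσ.injective, ?_⟩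
      intro i j
      show B (σ i) (σ j) = Tmat ℓ y b i j
      rw [Tmat]
      by_cases hij : (j:ℕ) < (i:ℕ)
      · rw [if_pos hij]
        exact hdec j i (Fin.lt_def.mpr hij)
      · rw [if_neg hij]
        refine hlt _ _ b hbs' (habovev _ _ ?_)
        intro hcon
        exact hij (Fin.lt_def.mp (hσ.lt_iff_lt.mp (Fin.lt_def.mpr hcon)))
    · -- both symbols exact
      have has' : a < s := by omega
      have hbs' : b < s := by omega
      refine hAv _ (Tmat_mem_DFam hℓ (show a < s+2 by omega) (show b < s+2 by omega)
        hab (show 2 ≤ a ∨ 2 ≤ b by omega)) ?_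
      refine ⟨fun i => f (Fin.castLE hcast i), fun j => g (Fin.castLE hcast j),
        hf.comp (Fin.castLE_injective _), hg.comp (Fin.castLE_injective _), ?_⟩
      intro i j
      show B (Fin.castLE hcast i) (Fin.castLE hcast j) = Tmat ℓ a b i j
      rw [Tmat]
      by_cases hij : (j:ℕ) < (i:ℕ)
      · rw [if_pos hij]
        exact hlt _ _ a has' (hbelowv _ _ hij)
      · rw [if_neg hij]
        exact hlt _ _ b hbs' (habovev _ _ hij)

end liftT
-- §7 the collapse step --------------------------------------------------

lemma step (s ℓ : ℕ) (hs : 2 ≤ s) (hℓ : 2 ≤ ℓ) :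
    ∃ ℓ₂ : ℕ, 2 ≤ ℓ₂ ∧ ∃ c : ℕ, 0 < c ∧
      ∀ (k p : ℕ) (F : MatN k p), RMat 2 F → ∀ m : ℕ,
        forb m (s+2) ((TFam ℓ (s+2) \ TFam ℓ 2) ∪ {⟨k, p, F⟩}) ≤
          c * forb m (s+1) ((TFam ℓ₂ (s+1) \ TFam ℓ₂ 2) ∪ {⟨k, p, F⟩}) := by
  classical
  obtain ⟨R4, hR4⟩ := ramsey 4 (2*ℓ+1) (by omega)
  obtain ⟨R2a, hR2a⟩ := ramsey 2 (2*ℓ+1) (by omega)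
  obtain ⟨R2b, hR2b⟩ := ramsey 2 ℓ (by omega)
  obtain ⟨CB, hCB⟩ := bb ℓ s (s+1) (by omega) (by omega)
  refine ⟨R4 + R2a + R2b + 2*ℓ + 2, by omega, CB + 1, by omega, ?_⟩
  set ℓ₂ := R4 + R2a + R2b + 2*ℓ + 2 with hℓ₂
  have hRam4' : ∀ col : Fin ℓ₂ → Fin ℓ₂ → Fin 4, ∃ σ : Fin (2*ℓ+1) → Fin ℓ₂,
      StrictMono σ ∧ ∃ c0, ∀ i j, i < j → col (σ i) (σ j) = c0 := by
    intro col
    obtain ⟨σ, hσ, _, c0, hc0⟩ := hR4 col Finset.univ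
      (by rw [Finset.card_univ, Fintype.card_fin]; omega)
    exact ⟨σ, hσ, c0, hc0⟩
  have hRam2a' : ∀ col : Fin ℓ₂ → Fin ℓ₂ → Fin 2, ∃ σ : Fin (2*ℓ+1) → Fin ℓ₂,
      StrictMono σ ∧ ∃ c0, ∀ i j, i < j → col (σ i) (σ j) = c0 := by
    intro col
    obtain ⟨σ, hσ, _, c0, hc0⟩ := hR2a col Finset.univ
      (by rw [Finset.card_univ, Fintype.card_fin]; omega)
    exact ⟨σ, hσ, c0, hc0⟩
  have hRam2b' : ∀ col : Fin ℓ₂ → Fin ℓ₂ → Fin 2, ∃ σ : Fin ℓ → Fin ℓ₂,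
      StrictMono σ ∧ ∃ c0, ∀ i j, i < j → col (σ i) (σ j) = c0 := by
    intro col
    obtain ⟨σ, hσ, _, c0, hc0⟩ := hR2b col Finset.univ
      (by rw [Finset.card_univ, Fintype.card_fin]; omega)
    exact ⟨σ, hσ, c0, hc0⟩
  intro k p F hF m
  apply forb_le
  intro n A hA hS hAv
  have hAvD : ∀ M ∈ TFam ℓ (s+2) \ TFam ℓ 2, ¬ IsConfig M.mat A :=
    fun M hM => hAv M (Or.inl hM)
  have hAvF : ¬ IsConfig F A := hAv ⟨k, p, F⟩ (Or.inr rfl)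
  set cA : MatN m n := fun i j => min (A i j) s with hcAdef
  set cls : Fin n → Finset (Fin n) :=
    fun j => Finset.univ.filter (fun j' => ∀ i, cA i j' = cA i j) with hclsdef
  have hmemcls : ∀ j, j ∈ cls j := by
    intro j
    rw [hclsdef]
    simp
  set rep : Fin n → Fin n := fun j => (cls j).min' ⟨j, hmemcls j⟩ with hrepdef
  have hrepcls : ∀ j, rep j ∈ cls j := fun j => Finset.min'_mem _ _
  have hrepcol : ∀ j i, cA i (rep j) = cA i j := by
    intro j i
    have h := hrepcls j
    rw [hclsdef, Finset.mem_filter] at h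
    exact h.2 i
  have hclseq : ∀ j j', (∀ i, cA i j' = cA i j) → cls j' = cls j := by
    intro j j' h
    rw [hclsdef]
    ext z
    simp only [Finset.mem_filter, Finset.mem_univ, true_and]
    constructor
    · intro hz i
      rw [hz i, h i]
    · intro hz i
      rw [hz i, h i]
  have hrepidem : ∀ j, rep (rep j) = rep j := by
    intro j
    have h1 : cls (rep j) = cls j := hclseq j (rep j) (hrepcol j)
    show (cls (rep j)).min' _ = (cls j).min' _
    congr 1
  set reps := Finset.univ.image rep with hrepsdef
  set N := reps.card with hN
  set E : Fin N → Fin n := fun j => reps.orderEmbOfFin hN.symm j with hE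
  have hEinj : Function.Injective E :=
    fun a b h => (reps.orderEmbOfFin hN.symm).injective h
  have hEmem : ∀ j, E j ∈ reps := fun j => reps.orderEmbOfFin_mem hN.symm j
  set A'' : MatN m N := fun i j => cA i (E j) with hA''
  -- A'' is an (s+1)-matrix
  have hrm : RMat (s+1) A'' := by
    intro i j
    show min (A i (E j)) s < s+1
    omega
  -- A'' is simple
  have hfix : ∀ x ∈ reps, rep x = x := by
    intro x hx
    rw [hrepsdef] at hx
    obtain ⟨y, _, rfl⟩ := Finset.mem_image.mp hx
    exact hrepidem y
  have hsimple : SimpleM A'' := by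
    intro j1 j2 h
    have hcols : ∀ i, cA i (E j1) = cA i (E j2) := h
    have h1 : cls (E j1) = cls (E j2) := hclseq _ _ hcols
    have h2 : rep (E j1) = rep (E j2) := by
      show (cls (E j1)).min' _ = (cls (E j2)).min' _
      congr 1
    rw [hfix _ (hEmem j1), hfix _ (hEmem j2)] at h2
    exact hEinj h2
  -- A'' avoids the family
  have hA''av : AvoidsFam A'' ((TFam ℓ₂ (s+1) \ TFam ℓ₂ 2) ∪ {⟨k, p, F⟩}) := by
    rintro M (⟨⟨a, b, ha, hb, hab, hMI | hMT⟩, hM2⟩ | hMF) hcfg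
    · subst hMI
      obtain ⟨f, g, hf, hg, hv⟩ := hcfg
      refine lift_I (ℓ₂ := ℓ₂) hs hℓ hA hAvD f (fun j => E (g j)) hf (hEinj.comp hg) ha hb hab
        (fun hc => hM2 ⟨a, b, hc.1, hc.2, hab, Or.inl rfl⟩) (by omega) hRam4' ?_
      intro i j
      exact hv i j
    · subst hMT
      obtain ⟨f, g, hf, hg, hv⟩ := hcfg
      refine lift_T (ℓ₂ := ℓ₂) hs hℓ hA hAvD f (fun j => E (g j)) hf (hEinj.comp hg) ha hb hab
        (fun hc => hM2 ⟨a, b, hc.1, hc.2, hab, Or.inr rfl⟩) (by omega) hRam2a' hRam2b' ?_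
      intro i j
      exact hv i j
    · rw [Set.mem_singleton_iff] at hMF
      subst hMF
      obtain ⟨f, g, hf, hg, hv⟩ := hcfg
      apply hAvF
      refine ⟨f, fun j => E (g j), hf, hEinj.comp hg, ?_⟩
      intro i j
      have h1 : min (A (f i) (E (g j))) s = F i j := hv i j
      have h2 := hF i j
      show A (f i) (E (g j)) = F i j
      omega
  -- bound the multiplicity of each class
  have hfiber : ∀ t ∈ reps, (Finset.univ.filter (fun j => rep j = t)).card ≤ CB := by
    intro t ht
    set Q := Finset.univ.filter (fun j => rep j = t) with hQ
    set P := Finset.univ.filter (fun i : Fin m => cA i t = s) with hP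
    set eQ : Fin Q.card → Fin n := fun j => Q.orderEmbOfFin rfl j with heQ
    set eP : Fin P.card → Fin m := fun i => P.orderEmbOfFin rfl i with heP
    have heQinj : Function.Injective eQ :=
      fun a b h => (Q.orderEmbOfFin rfl).injective h
    have hePinj : Function.Injective eP :=
      fun a b h => (P.orderEmbOfFin rfl).injective h
    have heQmem : ∀ j, eQ j ∈ Q := fun j => Q.orderEmbOfFin_mem rfl j
    have hePmem : ∀ i, eP i ∈ P := fun i => P.orderEmbOfFin_mem rfl i
    set Bm : MatN P.card Q.card := fun i j => A (eP i) (eQ j) with hBm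
    have hQcol : ∀ j ∈ Q, ∀ i, cA i j = cA i t := by
      intro j hj i
      rw [hQ, Finset.mem_filter] at hj
      rw [← hj.2]
      exact (hrepcol j i).symm
    have h2val : ∀ i j, Bm i j = s ∨ Bm i j = s+1 := by
      intro i j
      have hPm : cA (eP i) t = s := (Finset.mem_filter.mp (hePmem i)).2
      have hq : cA (eP i) (eQ j) = cA (eP i) t := hQcol (eQ j) (heQmem j) (eP i)
      have h3 := hA (eP i) (eQ j)
      have h4 : min (A (eP i) (eQ j)) s = s := hq.trans hPm
      show A (eP i) (eQ j) = s ∨ A (eP i) (eQ j) = s+1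
      omega
    have hBsimple : SimpleM Bm := by
      intro j1 j2 h
      have hall : ∀ i : Fin m, A i (eQ j1) = A i (eQ j2) := by
        intro i
        by_cases hiP : i ∈ P
        · obtain ⟨i', hi'⟩ : ∃ i', eP i' = i := by
            have hrange := Finset.range_orderEmbOfFin P (rfl : P.card = P.card)
            have hmem : i ∈ Set.range (P.orderEmbOfFin (rfl : P.card = P.card)) := by
              rw [hrange]
              exact Finset.mem_coe.mpr hiP
            obtain ⟨i', hi'⟩ := hmem
            exact ⟨i', hi'⟩
          rw [← hi']
          exact h i'
        · rw [hP, Finset.mem_filter] at hiP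
          have h5 : cA i t ≠ s := fun hc => hiP ⟨Finset.mem_univ i, hc⟩
          have h6 : min (A i (eQ j1)) s = cA i t := hQcol (eQ j1) (heQmem j1) i
          have h7 : min (A i (eQ j2)) s = cA i t := hQcol (eQ j2) (heQmem j2) i
          omega
      exact heQinj (hS _ _ hall)
    have hBavoid : ∀ (X : MatN ℓ ℓ), (⟨ℓ, ℓ, X⟩ : CMat) ∈ TFam ℓ (s+2) \ TFam ℓ 2 →
        ¬ IsConfig X Bm := by
      intro X hX hc
      obtain ⟨f, g, hf, hg, hv⟩ := hc
      exact hAvD _ hX ⟨fun i => eP (f i), fun j => eQ (g j),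
        hePinj.comp hf, heQinj.comp hg, fun i j => hv i j⟩
    exact hCB P.card Q.card Bm h2val hBsimple
      (hBavoid _ (Imat_mem_DFam hℓ (by omega) (by omega) (by omega) (Or.inl (by omega))))
      (hBavoid _ (Imat_mem_DFam hℓ (by omega) (by omega) (by omega) (Or.inl (by omega))))
      (hBavoid _ (Tmat_mem_DFam hℓ (by omega) (by omega) (by omega) (Or.inl (by omega))))
      (hBavoid _ (Tmat_mem_DFam hℓ (by omega) (by omega) (by omega) (Or.inl (by omega))))
  -- counting
  have hcount : n ≤ (CB + 1) * N := by
    have h1 : (Finset.univ : Finset (Fin n)).card =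
        ∑ t ∈ reps, (Finset.univ.filter (fun j => rep j = t)).card :=
      Finset.card_eq_sum_card_fiberwise
        (fun j _ => Finset.mem_image_of_mem rep (Finset.mem_univ j))
    have h2 : ∑ t ∈ reps, (Finset.univ.filter (fun j => rep j = t)).card ≤
        ∑ _t ∈ reps, CB := Finset.sum_le_sum hfiber
    have h3 : ∑ _t ∈ reps, CB = N * CB := by
      rw [Finset.sum_const, smul_eq_mul, hN]
    have h4 : (Finset.univ : Finset (Fin n)).card = n := by simp
    calc n ≤ N * CB := by omega
      _ ≤ (CB + 1) * N := by ring_nf; omega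
  have hNle : N ≤ forb m (s+1) ((TFam ℓ₂ (s+1) \ TFam ℓ₂ 2) ∪ {⟨k, p, F⟩}) :=
    le_forb (by omega) A'' hrm hsimple hA''av
  calc n ≤ (CB + 1) * N := hcount
    _ ≤ (CB + 1) * forb m (s+1) ((TFam ℓ₂ (s+1) \ TFam ℓ₂ 2) ∪ {⟨k, p, F⟩}) :=
        Nat.mul_le_mul_left _ hNle
-- §8 chain induction and the ℓ = 1 case ----------------------------------

lemma chain (d : ℕ) : ∀ (ℓ : ℕ), 2 ≤ ℓ →
    ∃ ℓ' : ℕ, 1 ≤ ℓ' ∧ ∃ c : ℕ,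
      ∀ (k p : ℕ) (F : MatN k p), RMat 2 F → ∀ m : ℕ,
        forb m (d+3) ((TFam ℓ (d+3) \ TFam ℓ 2) ∪ {⟨k, p, F⟩}) ≤
          c * forb m 3 ((TFam ℓ' 3 \ TFam ℓ' 2) ∪ {⟨k, p, F⟩}) := by
  induction d with
  | zero =>
    intro ℓ hℓ
    exact ⟨ℓ, by omega, 1, fun k p F hF m => by
      rw [one_mul]⟩
  | succ d ih =>
    intro ℓ hℓ
    obtain ⟨ℓ₂, hℓ₂, c1, hc1, hstep⟩ := step (d+2) ℓ (by omega) hℓ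
    obtain ⟨ℓ', hℓ', c2, hchain⟩ := ih ℓ₂ hℓ₂
    refine ⟨ℓ', hℓ', c1 * c2, ?_⟩
    intro k p F hF m
    have h1 := hstep k p F hF m
    have h2 := hchain k p F hF m
    calc forb m (d+1+3) ((TFam ℓ (d+1+3) \ TFam ℓ 2) ∪ {⟨k, p, F⟩})
        = forb m (d+2+2) ((TFam ℓ (d+2+2) \ TFam ℓ 2) ∪ {⟨k, p, F⟩}) := by ring_nf
      _ ≤ c1 * forb m (d+2+1) ((TFam ℓ₂ (d+2+1) \ TFam ℓ₂ 2) ∪ {⟨k, p, F⟩}) := h1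
      _ = c1 * forb m (d+3) ((TFam ℓ₂ (d+3) \ TFam ℓ₂ 2) ∪ {⟨k, p, F⟩}) := by ring_nf
      _ ≤ c1 * (c2 * forb m 3 ((TFam ℓ' 3 \ TFam ℓ' 2) ∪ {⟨k, p, F⟩})) :=
          Nat.mul_le_mul_left _ h2
      _ = c1 * c2 * forb m 3 ((TFam ℓ' 3 \ TFam ℓ' 2) ∪ {⟨k, p, F⟩}) := by ring

lemma imat_one_eq (a b b' : ℕ) : Imat 1 a b = Imat 1 a b' := by
  funext i j
  simp only [Imat, if_pos (Subsingleton.elim i j)]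

lemma tmat_one_eq (a a' b : ℕ) : Tmat 1 a b = Tmat 1 a' b := by
  funext i j
  have : ¬ ((j:ℕ) < (i:ℕ)) := by omega
  simp only [Tmat, if_neg this]

lemma ell_one (r : ℕ) (hr : 2 < r) (k p : ℕ) (F : MatN k p) (m : ℕ) :
    forb m r ((TFam 1 r \ TFam 1 2) ∪ {⟨k, p, F⟩}) ≤
      forb m 3 ((TFam 1 3 \ TFam 1 2) ∪ {⟨k, p, F⟩}) := by
  apply forb_le
  intro n A hA hS hAv
  have hone : Function.Injective (fun _ : Fin 1 => (0 : Fin 1)) :=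
    fun a b _ => Subsingleton.elim a b
  have hA2 : ∀ i j, A i j < 2 := by
    intro i j
    by_contra h
    push_neg at h
    refine hAv ⟨1, 1, Imat 1 (A i j) 0⟩ (Or.inl ⟨⟨A i j, 0, hA i j, by omega, by omega,
      Or.inl rfl⟩, not_in_tfam2 _ ⟨0, 0, by rw [Imat, if_pos rfl]; exact h⟩⟩) ?_
    refine ⟨fun _ => i, fun _ => j, fun a b _ => Subsingleton.elim a b,
      fun a b _ => Subsingleton.elim a b, ?_⟩
    intro i' j'
    show A i j = Imat 1 (A i j) 0 i' j'
    simp only [Imat, if_pos (Subsingleton.elim i' j')]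
  refine le_forb (by omega) A (fun i j => by have := hA2 i j; omega) hS ?_
  rintro M (⟨⟨a, b, ha, hb, hab, hMI | hMT⟩, hM2⟩ | hMF) hcfg
  · subst hMI
    have ha2 : 2 ≤ a := by
      by_contra hc
      push_neg at hc
      exact hM2 ⟨a, 1 - a, hc, by omega, by omega, Or.inl (by rw [imat_one_eq a b (1-a)])⟩
    obtain ⟨f, g, _, _, hv⟩ := hcfg
    have h1 := hv 0 0
    simp [Imat] at h1
    have h2 := hA2 (f 0) (g 0)
    omega
  · subst hMT
    have hb2 : 2 ≤ b := by
      by_contra hc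
      push_neg at hc
      exact hM2 ⟨1 - b, b, by omega, hc, by omega, Or.inr (by rw [tmat_one_eq a (1-b) b])⟩
    obtain ⟨f, g, _, _, hv⟩ := hcfg
    have h1 := hv 0 0
    simp [Tmat] at h1
    have h2 := hA2 (f 0) (g 0)
    omega
  · rw [Set.mem_singleton_iff] at hMF
    subst hMF
    exact hAv ⟨k, p, F⟩ (Or.inr rfl) hcfg

/-- For `r > 2`, `ℓ ≥ 1`, there are `ℓ' ≥ 1` and a constant `c`,
depending only on `r` and `ℓ`, with
`forb(m, r, (𝒯_ℓ(r) \ 𝒯_ℓ(2)) ∪ {F}) ≤ c · forb(m, 3, (𝒯_{ℓ'}(3) \ 𝒯_{ℓ'}(2)) ∪ {F})`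
for every (0,1)-matrix `F` and every `m ≥ 1`. -/
theorem stmt1 (r ℓ : ℕ) (hr : 2 < r) (hℓ : 1 ≤ ℓ) :
    ∃ ℓ' : ℕ, 1 ≤ ℓ' ∧ ∃ c : ℕ,
      ∀ (k p : ℕ) (F : MatN k p), RMat 2 F →
        ∀ m : ℕ, 1 ≤ m →
          forb m r ((TFam ℓ r \ TFam ℓ 2) ∪ {⟨k, p, F⟩}) ≤
            c * forb m 3 ((TFam ℓ' 3 \ TFam ℓ' 2) ∪ {⟨k, p, F⟩}) := by
  obtain ⟨d, rfl⟩ : ∃ d, r = d + 3 := ⟨r - 3, by omega⟩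
  by_cases hl1 : ℓ = 1
  · subst hl1
    exact ⟨1, le_refl 1, 1, fun k p F hF m _ => by
      rw [one_mul]; exact ell_one (d+3) (by omega) k p F m⟩
  · obtain ⟨ℓ', hℓ', c, hc⟩ := chain d ℓ (by omega)
    exact ⟨ℓ', hℓ', c, fun k p F hF m _ => hc k p F hF m⟩
end

section
/- Let ℓ ≥ 4. Then forb(m, 3, (𝒯_ℓ(3) \ 𝒯_ℓ(2)) ∪ {[0 1]}) is Θ(1): there is a constant c (depending only on ℓ) such that forb(m, 3, (𝒯_ℓ(3) \ 𝒯_ℓ(2)) ∪ {[0 1]}) ≤ c for every m ≥ 1, where [0 1] denotes the 1×2 matrix with entries 0 and 1. -/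
section AuxiliaryForStmt3

open Finset


/-- Focusing sequence for pair colorings. -/
theorem chain2 (C : Type) [Fintype C] [Nonempty C] [DecidableEq C] (t : ℕ) :
    ∃ M : ℕ, ∀ (χ : ℕ → ℕ → C) (V : Finset ℕ), M ≤ V.card →
      ∃ (a : ℕ → ℕ) (d : ℕ → C),
        (∀ i j, i < j → j < t → a i < a j) ∧ (∀ i < t, a i ∈ V) ∧
        (∀ i j, i < j → j < t → χ (a i) (a j) = d i) := by
  induction t with
  | zero => exact ⟨0, fun χ V _ => ⟨id, fun _ => Classical.arbitrary C,
      fun i j _ h => absurd h (Nat.not_lt_zero j), fun i h => absurd h (Nat.not_lt_zero i),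
      fun i j _ h => absurd h (Nat.not_lt_zero j)⟩⟩
  | succ t ih =>
    obtain ⟨M, hM⟩ := ih
    refine ⟨Fintype.card C * M + 1, fun χ V hV => ?_⟩
    have hVne : V.Nonempty := Finset.card_pos.mp (by omega)
    set a₀ := V.min' hVne with ha₀
    have ha₀V : a₀ ∈ V := V.min'_mem hVne
    set V' := V.erase a₀ with hV'
    have hV'card : Fintype.card C * M ≤ V'.card := by
      have h9 : V'.card = V.card - 1 := by rw [hV']; exact Finset.card_erase_of_mem ha₀V
      omega
    obtain ⟨c₀, _, hc₀⟩ := Finset.exists_le_card_fiber_of_mul_le_card_of_maps_to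
      (f := fun v => χ a₀ v) (s := V') (t := Finset.univ) (n := M)
      (fun a _ => Finset.mem_univ _) Finset.univ_nonempty (by simpa using hV'card)
    obtain ⟨a, d, hmono, hmem, hcol⟩ := hM χ _ hc₀
    have hmemU : ∀ i < t, a i ∈ V' ∧ χ a₀ (a i) = c₀ := by
      intro i hi
      have := hmem i hi
      simp only [Finset.mem_filter] at this
      exact this
    refine ⟨fun p => Nat.casesOn p a₀ a, fun p => Nat.casesOn p c₀ d, ?_, ?_, ?_⟩
    · intro i j hij hj
      cases i with
      | zero =>
        cases j with
        | zero => omega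
        | succ j' =>
          have hmem' := (hmemU j' (by omega)).1
          have h1 : a j' ∈ V := Finset.mem_of_mem_erase hmem'
          have h2 : a j' ≠ a₀ := Finset.ne_of_mem_erase hmem'
          exact lt_of_le_of_ne (V.min'_le _ h1) (Ne.symm h2)
      | succ i' =>
        cases j with
        | zero => omega
        | succ j' => exact hmono i' j' (by omega) (by omega)
    · intro i hi
      cases i with
      | zero => exact ha₀V
      | succ i' => exact Finset.mem_of_mem_erase (hmemU i' (by omega)).1
    · intro i j hij hj
      cases i with
      | zero =>
        cases j with
        | zero => omega
        | succ j' => exact (hmemU j' (by omega)).2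
      | succ i' =>
        cases j with
        | zero => omega
        | succ j' => exact hcol i' j' (by omega) (by omega)

/-- Finite Ramsey theorem for pairs, host-set version. -/
theorem mono2 (C : Type) [Fintype C] [Nonempty C] [DecidableEq C] (k : ℕ) :
    ∃ M : ℕ, ∀ (χ : ℕ → ℕ → C) (V : Finset ℕ), M ≤ V.card →
      ∃ b : ℕ → ℕ,
        (∀ i j, i < j → j < k → b i < b j) ∧ (∀ i < k, b i ∈ V) ∧
        ∃ c₀ : C, ∀ i j, i < j → j < k → χ (b i) (b j) = c₀ := by
  obtain ⟨M, hM⟩ := chain2 C (Fintype.card C * k + 1)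
  refine ⟨M, fun χ V hV => ?_⟩
  obtain ⟨a, d, hmono, hmem, hcol⟩ := hM χ V hV
  set t := Fintype.card C * k + 1 with ht
  obtain ⟨c₀, _, hc₀⟩ := Finset.exists_le_card_fiber_of_mul_le_card_of_maps_to
    (f := fun i => d i) (s := Finset.range t) (t := Finset.univ) (n := k)
    (fun a _ => Finset.mem_univ _) Finset.univ_nonempty
    (by simp only [Finset.card_univ, Finset.card_range, ht]; omega)
  set F := (Finset.range t).filter (fun i => d i = c₀) with hF
  obtain ⟨F', hF'sub, hF'card⟩ := Finset.exists_subset_card_eq (s := F) (n := k) hc₀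
  set e := F'.orderIsoOfFin hF'card with he
  set b : ℕ → ℕ := fun i => if h : i < k then a (e ⟨i, h⟩ : ℕ) else 0 with hb
  have hbv : ∀ i (h : i < k), b i = a (e ⟨i, h⟩ : ℕ) := fun i h => dif_pos h
  refine ⟨b, ?_, ?_, c₀, ?_⟩
  all_goals
    intro i
  · intro j hij hj
    rw [hbv i (by omega), hbv j hj]
    have h1 : (e ⟨i, by omega⟩ : ℕ) < (e ⟨j, hj⟩ : ℕ) := by
      have := e.strictMono (show (⟨i, by omega⟩ : Fin k) < ⟨j, hj⟩ from hij)
      exact this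
    have h2 : (e ⟨j, hj⟩ : ℕ) < t := by
      have := hF'sub (e ⟨j, hj⟩).2
      rw [hF, Finset.mem_filter, Finset.mem_range] at this
      exact this.1
    exact hmono _ _ h1 h2
  · intro hi
    rw [hbv i hi]
    have h2 : (e ⟨i, hi⟩ : ℕ) < t := by
      have := hF'sub (e ⟨i, hi⟩).2
      rw [hF, Finset.mem_filter, Finset.mem_range] at this
      exact this.1
    exact hmem _ h2
  · intro j hij hj
    have hik : i < k := by omega
    rw [hbv i hik, hbv j hj]
    have h1 : (e ⟨i, hik⟩ : ℕ) < (e ⟨j, hj⟩ : ℕ) :=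
      e.strictMono (show (⟨i, hik⟩ : Fin k) < ⟨j, hj⟩ from hij)
    have hmemF : ∀ (x : Fin k), ((e x : ℕ) < t) ∧ d (e x : ℕ) = c₀ := by
      intro x
      have := hF'sub (e x).2
      rw [hF, Finset.mem_filter, Finset.mem_range] at this
      exact this
    rw [hcol _ _ h1 (hmemF ⟨j, hj⟩).1]
    exact (hmemF ⟨i, hik⟩).2

/-- Focusing sequence for triple colorings. -/
theorem chain3 (C : Type) [Fintype C] [Nonempty C] [DecidableEq C] (t : ℕ) :
    ∃ M : ℕ, ∀ (χ : ℕ → ℕ → ℕ → C) (V : Finset ℕ), M ≤ V.card →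
      ∃ (a : ℕ → ℕ) (e : ℕ → ℕ → C),
        (∀ i j, i < j → j < t → a i < a j) ∧ (∀ i < t, a i ∈ V) ∧
        (∀ i j l, i < j → j < l → l < t → χ (a i) (a j) (a l) = e i j) := by
  induction t with
  | zero => exact ⟨0, fun χ V _ => ⟨id, fun _ _ => Classical.arbitrary C,
      fun i j _ h => absurd h (Nat.not_lt_zero j), fun i h => absurd h (Nat.not_lt_zero i),
      fun i j l _ _ h => absurd h (Nat.not_lt_zero l)⟩⟩
  | succ t ih =>
    obtain ⟨M, hM⟩ := ih
    obtain ⟨M₂, hM₂⟩ := mono2 C M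
    obtain ⟨M₂', hM₂'⟩ := chain2 C M
    refine ⟨M₂' + 1, fun χ V hV => ?_⟩
    have hVne : V.Nonempty := Finset.card_pos.mp (by omega)
    set a₀ := V.min' hVne with ha₀
    have ha₀V : a₀ ∈ V := V.min'_mem hVne
    set V' := V.erase a₀ with hV'
    have hV'card : M₂' ≤ V'.card := by
      have h9 : V'.card = V.card - 1 := by rw [hV']; exact Finset.card_erase_of_mem ha₀V
      omega
    obtain ⟨b, d, hbmono, hbmem, hbcol⟩ := hM₂' (fun x y => χ a₀ x y) V' hV'card
    set W := (Finset.range M).image b with hW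
    have hWcard : M ≤ W.card := by
      rw [hW]
      rw [Finset.card_image_of_injOn]
      · simp
      · intro x hx y hy hxy
        simp only [Finset.mem_coe, Finset.mem_range] at hx hy
        by_contra hne
        rcases Nat.lt_or_ge x y with h | h
        · exact absurd hxy (Nat.ne_of_lt (hbmono x y h hy))
        · have : x ≠ y := hne
          have hyx : y < x := by omega
          exact absurd hxy.symm (Nat.ne_of_lt (hbmono y x hyx hx))
    obtain ⟨a, e, hamono, hamem, hacol⟩ := hM χ W hWcard
    -- for each i < t, find p i with a i = b (p i), p i < M
    have hpre : ∀ i < t, ∃ p < M, a i = b p := by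
      intro i hi
      have := hamem i hi
      rw [hW, Finset.mem_image] at this
      obtain ⟨p, hp, hpe⟩ := this
      exact ⟨p, Finset.mem_range.mp hp, hpe.symm⟩
    classical
    set p : ℕ → ℕ := fun i => if h : i < t then (hpre i h).choose else 0 with hp
    have hpspec : ∀ i (h : i < t), p i < M ∧ a i = b (p i) := by
      intro i h
      have h1 := (hpre i h).choose_spec
      simp only [hp, dif_pos h]
      exact ⟨h1.1, h1.2⟩
    have hpmono : ∀ i j, i < j → j < t → p i < p j := by
      intro i j hij hj
      obtain ⟨hpi, hai⟩ := hpspec i (by omega)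
      obtain ⟨hpj, haj⟩ := hpspec j hj
      by_contra hle
      have hle' : p j ≤ p i := by omega
      have : b (p j) ≤ b (p i) := by
        rcases Nat.eq_or_lt_of_le hle' with h | h
        · rw [h]
        · exact le_of_lt (hbmono _ _ h hpi)
      have : a j ≤ a i := by rw [haj, hai]; exact this
      have := hamono i j hij hj
      omega
    refine ⟨fun q => Nat.casesOn q a₀ a,
      fun q => Nat.casesOn q (fun r => Nat.casesOn r (Classical.arbitrary C) (fun r' => d (p r')))
        (fun q' => fun r => Nat.casesOn r (Classical.arbitrary C) (fun r' => e q' r')), ?_, ?_, ?_⟩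
    · intro i j hij hj
      cases i with
      | zero =>
        cases j with
        | zero => omega
        | succ j' =>
          have hmem' : a j' ∈ V' := by
            obtain ⟨hpj, haj⟩ := hpspec j' (by omega)
            rw [haj]
            exact hbmem _ hpj
          exact lt_of_le_of_ne (V.min'_le _ (Finset.mem_of_mem_erase hmem'))
            (Ne.symm (Finset.ne_of_mem_erase hmem'))
      | succ i' =>
        cases j with
        | zero => omega
        | succ j' => exact hamono i' j' (by omega) (by omega)
    · intro i hi
      cases i with
      | zero => exact ha₀V
      | succ i' =>
        have hmem' : a i' ∈ V' := by
          obtain ⟨hpi, hai⟩ := hpspec i' (by omega)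
          rw [hai]
          exact hbmem _ hpi
        exact Finset.mem_of_mem_erase hmem'
    · intro i j l hij hjl hl
      cases i with
      | zero =>
        cases j with
        | zero => omega
        | succ j' =>
          cases l with
          | zero => omega
          | succ l' =>
            obtain ⟨hpj, haj⟩ := hpspec j' (by omega)
            obtain ⟨hpl, hal⟩ := hpspec l' (by omega)
            show χ a₀ (a j') (a l') = d (p j')
            rw [haj, hal]
            exact hbcol (p j') (p l') (hpmono j' l' (by omega) (by omega)) hpl
      | succ i' =>
        cases j with
        | zero => omega
        | succ j' =>
          cases l with
          | zero => omega
          | succ l' =>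
            exact hacol i' j' l' (by omega) (by omega) (by omega)

/-- Finite Ramsey theorem for triples, host-set version. -/
theorem mono3 (C : Type) [Fintype C] [Nonempty C] [DecidableEq C] (k : ℕ) :
    ∃ M : ℕ, ∀ (χ : ℕ → ℕ → ℕ → C) (V : Finset ℕ), M ≤ V.card →
      ∃ b : ℕ → ℕ,
        (∀ i j, i < j → j < k → b i < b j) ∧ (∀ i < k, b i ∈ V) ∧
        ∃ c₀ : C, ∀ i j l, i < j → j < l → l < k → χ (b i) (b j) (b l) = c₀ := by
  obtain ⟨M₂, hM₂⟩ := mono2 C k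
  obtain ⟨M₃, hM₃⟩ := chain3 C M₂
  refine ⟨M₃, fun χ V hV => ?_⟩
  obtain ⟨a, e, hamono, hamem, hacol⟩ := hM₃ χ V hV
  obtain ⟨s, hsmono, hsmem, c₀, hscol⟩ := hM₂ (fun x y => e x y) (Finset.range M₂) (by simp)
  have hsr : ∀ i < k, s i < M₂ := by
    intro i hi
    exact Finset.mem_range.mp (hsmem i hi)
  refine ⟨fun i => a (s i), ?_, ?_, c₀, ?_⟩
  · intro i j hij hj
    exact hamono _ _ (hsmono i j hij hj) (hsr j hj)
  · intro i hi
    exact hamem _ (hsr i hi)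
  · intro i j l hij hjl hl
    show χ (a (s i)) (a (s j)) (a (s l)) = c₀
    rw [hacol _ _ _ (hsmono i j hij (by omega)) (hsmono j l hjl hl) (hsr l hl)]
    exact hscol i j hij (by omega)

/-- Helper: build a pattern from a membership table. -/
lemma buildPat {α : Type} [DecidableEq α] {n k : ℕ} (S : Fin n → Finset α)
    (z : ℕ → α) (col : ℕ → Fin n)
    (hcolinj : ∀ q q', q ≤ 2*k+2 → q' ≤ 2*k+2 → col q = col q' → q = q')
    (Q : ℕ → ℕ → Prop) (hQ : ∀ p q, p ≤ 2*k → q ≤ 2*k+2 → (z p ∈ S (col q) ↔ Q p q))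
    (hzS : ∀ p, p ≤ 2*k → ∃ j, z p ∈ S j)
    (P : Fin k → Fin k → Prop) (r s : ℕ → ℕ)
    (hr : ∀ i, i < k → r i ≤ 2*k) (hs : ∀ j, j < k → s j ≤ 2*k+2)
    (hsinj : ∀ j j', j < k → j' < k → s j = s j' → j = j')
    (hPQ : ∀ i j : Fin k, Q (r (i : ℕ)) (s (j : ℕ)) ↔ P i j)
    (hPdist : ∀ i i' : Fin k, (∀ j, (P i j ↔ P i' j)) → i = i') :
    ∃ (x : Fin k → α) (g : Fin k → Fin n), Function.Injective x ∧ Function.Injective g ∧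
      (∀ i, ∃ j, x i ∈ S j) ∧ (∀ i j, x i ∈ S (g j) ↔ P i j) := by
  refine ⟨fun i => z (r (i : ℕ)), fun j => col (s (j : ℕ)), ?_, ?_, ?_, ?_⟩
  · have hpat : ∀ i j : Fin k, z (r (i : ℕ)) ∈ S (col (s (j : ℕ))) ↔ P i j := by
      intro i j
      rw [hQ _ _ (hr _ i.isLt) (hs _ j.isLt)]
      exact hPQ i j
    intro i i' hii
    have hii' : z (r (i : ℕ)) = z (r (i' : ℕ)) := hii
    apply hPdist
    intro j
    rw [← hpat i j, ← hpat i' j, hii']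
  · intro j j' hjj
    have := hcolinj _ _ (hs _ j.isLt) (hs _ j'.isLt) hjj
    exact Fin.ext (hsinj _ _ j.isLt j'.isLt this)
  · intro i
    exact hzS _ (hr _ i.isLt)
  · intro i j
    rw [hQ _ _ (hr _ i.isLt) (hs _ j.isLt)]
    exact hPQ i j

/-- The Balogh–Bollobás-type theorem: a large family of distinct finite sets contains
one of the four unavoidable trace patterns. -/
theorem BBmain (k : ℕ) (hk : 1 ≤ k) :
    ∃ N : ℕ, ∀ (α : Type) [inst : DecidableEq α] (n : ℕ) (S : Fin n → Finset α),
      Function.Injective S → N ≤ n →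
      ∃ (x : Fin k → α) (g : Fin k → Fin n),
        Function.Injective x ∧ Function.Injective g ∧ (∀ i, ∃ j, x i ∈ S j) ∧
        ((∀ i j, x i ∈ S (g j) ↔ i = j) ∨ (∀ i j, x i ∈ S (g j) ↔ i ≠ j) ∨
         (∀ i j, x i ∈ S (g j) ↔ i ≤ j) ∨ (∀ i j, x i ∈ S (g j) ↔ j < i)) := by
  classical
  obtain ⟨M₃, hM₃⟩ := mono3 (Bool × Bool × Bool) (2*k+3)
  refine ⟨M₃ + 2, fun α inst n S hSinj hn => ?_⟩
  -- α is nonempty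
  have hne01 : S ⟨0, by omega⟩ ≠ S ⟨1, by omega⟩ := by
    intro h
    have := hSinj h
    simp [Fin.ext_iff] at this
  have hα : Nonempty α := by
    by_contra hemp
    apply hne01
    apply Finset.ext
    intro a
    exact absurd ⟨a⟩ hemp
  haveI := hα
  set S' : ℕ → Finset α := fun i => if h : i < n then S ⟨i, h⟩ else ∅ with hS'
  have hS'v : ∀ i (h : i < n), S' i = S ⟨i, h⟩ := fun i h => dif_pos h
  have hS'ne : ∀ i j, i < j → j < n → S' i ≠ S' j := by
    intro i j hij hj h
    rw [hS'v i (by omega), hS'v j hj] at h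
    have := hSinj h
    simp [Fin.ext_iff] at this
    omega
  set D : ℕ → ℕ → Finset α := fun i j => (S' j \ S' i) ∪ (S' i \ S' j) with hD
  set xd : ℕ → ℕ → α := fun i j =>
    if h : (D i j).Nonempty then h.choose else Classical.arbitrary α with hxdd
  have hxd : ∀ i j, i < j → j < n → xd i j ∈ D i j := by
    intro i j hij hj
    have hne : (D i j).Nonempty := by
      by_contra h
      rw [Finset.not_nonempty_iff_eq_empty] at h
      apply hS'ne i j hij hj
      apply Finset.ext
      intro a
      constructor <;> intro ha <;> by_contra hb
      · have : a ∈ D i j := by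
          rw [hD]; simp only [Finset.mem_union, Finset.mem_sdiff]; tauto
        rw [h] at this; exact absurd this (Finset.notMem_empty a)
      · have : a ∈ D i j := by
          rw [hD]; simp only [Finset.mem_union, Finset.mem_sdiff]; tauto
        rw [h] at this; exact absurd this (Finset.notMem_empty a)
    rw [hxdd]
    simp only [dif_pos hne]
    exact hne.choose_spec
  have hDmem : ∀ i j a, a ∈ D i j → (a ∈ S' i ↔ ¬ a ∈ S' j) := by
    intro i j a ha
    rw [hD] at ha
    simp only [Finset.mem_union, Finset.mem_sdiff] at ha
    tauto
  have hDS : ∀ i j a, a ∈ D i j → (a ∈ S' i ∨ a ∈ S' j) := by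
    intro i j a ha
    rw [hD] at ha
    simp only [Finset.mem_union, Finset.mem_sdiff] at ha
    tauto
  set χ : ℕ → ℕ → ℕ → Bool × Bool × Bool := fun i j l =>
    (decide (xd i j ∈ S' j), decide (xd i j ∈ S' l), decide (xd j l ∈ S' i)) with hχ
  obtain ⟨b, hbmono, hbmem, ⟨c1, c2, c3⟩, hcol⟩ := hM₃ χ (Finset.range n)
    (by rw [Finset.card_range]; omega)
  have hbn : ∀ i, i < 2*k+3 → b i < n := by
    intro i hi
    exact Finset.mem_range.mp (hbmem i hi)
  set z : ℕ → α := fun p => xd (b p) (b (p+1)) with hz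
  set col : ℕ → Fin n := fun q => ⟨b (min q (2*k+2)), hbn _ (by omega)⟩ with hcolq
  have hScol : ∀ q, q ≤ 2*k+2 → S (col q) = S' (b q) := by
    intro q hq
    have hm : min q (2*k+2) = q := by omega
    rw [hcolq]
    simp only [hm]
    rw [hS'v (b q) (hbn q (by omega))]
  have hcolinj : ∀ q q', q ≤ 2*k+2 → q' ≤ 2*k+2 → col q = col q' → q = q' := by
    intro q q' hq hq' h
    have hm : min q (2*k+2) = q := by omega
    have hm' : min q' (2*k+2) = q' := by omega
    have hbb : b q = b q' := by
      have := congrArg Fin.val h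
      rw [hcolq] at this
      simpa [hm, hm'] using this
    by_contra hne
    rcases Nat.lt_or_ge q q' with hlt | hge
    · exact absurd hbb (Nat.ne_of_lt (hbmono q q' hlt (by omega)))
    · have : q' < q := by omega
      exact absurd hbb.symm (Nat.ne_of_lt (hbmono q' q this (by omega)))
  have hc : ∀ i j l, i < j → j < l → l < 2*k+3 →
      decide (xd (b i) (b j) ∈ S' (b j)) = c1 ∧ decide (xd (b i) (b j) ∈ S' (b l)) = c2 ∧
      decide (xd (b j) (b l) ∈ S' (b i)) = c3 := by
    intro i j l h1 h2 h3
    have := hcol i j l h1 h2 h3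
    rw [hχ] at this
    simpa [Prod.ext_iff] using this
  have hz1 : ∀ p, p ≤ 2*k → (z p ∈ S' (b (p+1)) ↔ c1 = true) := by
    intro p hp
    have h := (hc p (p+1) (2*k+2) (by omega) (by omega) (by omega)).1
    rw [← h, decide_eq_true_eq, hz]
  have hz0 : ∀ p, p ≤ 2*k+1 → (z p ∈ S' (b p) ↔ ¬ z p ∈ S' (b (p+1))) := by
    intro p hp
    exact hDmem _ _ _ (hxd (b p) (b (p+1)) (hbmono p (p+1) (by omega) (by omega))
      (hbn (p+1) (by omega)))
  have hz2 : ∀ p q, p+1 < q → q ≤ 2*k+2 → (z p ∈ S' (b q) ↔ c2 = true) := by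
    intro p q h1 h2
    have h := (hc p (p+1) q (by omega) h1 (by omega)).2.1
    rw [← h, decide_eq_true_eq, hz]
  have hz3 : ∀ p q, q < p → p ≤ 2*k+1 → (z p ∈ S' (b q) ↔ c3 = true) := by
    intro p q h1 h2
    have h := (hc q p (p+1) h1 (by omega) (by omega)).2.2
    rw [← h, decide_eq_true_eq, hz]
  have hmaster : ∀ p q, p ≤ 2*k → q ≤ 2*k+2 → (z p ∈ S (col q) ↔
      ((if q < p then c3 else if q = p then !c1 else if q = p+1 then c1 else c2) = true)) := by
    intro p q hp hq
    rw [hScol q hq]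
    by_cases h1 : q < p
    · rw [if_pos h1]; exact hz3 p q h1 (by omega)
    · rw [if_neg h1]
      by_cases h2 : q = p
      · rw [if_pos h2, h2]
        rw [hz0 p (by omega), hz1 p hp]
        cases c1 <;> simp
      · rw [if_neg h2]
        by_cases h3 : q = p+1
        · rw [if_pos h3, h3]; exact hz1 p hp
        · rw [if_neg h3]; exact hz2 p q (by omega) hq
  have hzS : ∀ p, p ≤ 2*k → ∃ j : Fin n, z p ∈ S j := by
    intro p hp
    have hd := hxd (b p) (b (p+1)) (hbmono p (p+1) (by omega) (by omega)) (hbn (p+1) (by omega))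
    rcases hDS _ _ _ hd with h | h
    · refine ⟨⟨b p, hbn p (by omega)⟩, ?_⟩
      rw [← hS'v (b p) (hbn p (by omega))]
      exact h
    · refine ⟨⟨b (p+1), hbn (p+1) (by omega)⟩, ?_⟩
      rw [← hS'v (b (p+1)) (hbn (p+1) (by omega))]
      exact h
  clear hz1 hz0 hz2 hz3 hc hcol hχ hbmem hxd hDmem hDS hS'ne
  cases c1 <;> cases c2 <;> cases c3
  -- case (false, false, false) : pattern eq
  · obtain ⟨x, g, h1, h2, h3, h4⟩ := buildPat S z col hcolinj _ hmaster hzS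
      (fun i j => i = j) (fun i => i) (fun j => j)
      (by intro i hi; omega) (by intro j hj; omega) (by intro j j' _ _ h; exact h)
      (by
        intro i j
        split_ifs with ha hb hcc <;>
          simp only [Bool.not_false, Bool.not_true, Fin.lt_def, Fin.le_def, Fin.ext_iff,
            eq_self_iff_true, Bool.false_eq_true, true_iff, false_iff, iff_true, iff_false,
            not_lt, not_le, ne_eq, not_not] <;> omega)
      (by intro i i' h; exact ((h i).mp rfl).symm)
    exact ⟨x, g, h1, h2, h3, Or.inl h4⟩
  -- case (false, false, true) : q < p ∨ q = p : with s j = j+1 : pattern gt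
  · obtain ⟨x, g, h1, h2, h3, h4⟩ := buildPat S z col hcolinj _ hmaster hzS
      (fun i j => j < i) (fun i => i) (fun j => j+1)
      (by intro i hi; omega) (by intro j hj; omega) (by intro j j' _ _ h; omega)
      (by
        intro i j
        split_ifs with ha hb hcc <;>
          simp only [Bool.not_false, Bool.not_true, Fin.lt_def, Fin.le_def, Fin.ext_iff,
            eq_self_iff_true, Bool.false_eq_true, true_iff, false_iff, iff_true, iff_false,
            not_lt, not_le, ne_eq, not_not] <;> omega)
      (by
        intro i i' h
        have ha : ¬ i < i' := fun hh => absurd ((h i).mpr hh) (lt_irrefl i)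
        have hb : ¬ i' < i := fun hh => absurd ((h i').mp hh) (lt_irrefl i')
        exact le_antisymm (not_lt.mp hb) (not_lt.mp ha))
    exact ⟨x, g, h1, h2, h3, Or.inr (Or.inr (Or.inr h4))⟩
  -- case (false, true, false) : q = p ∨ q > p+1 : with r=2i, s=2j : pattern le
  · obtain ⟨x, g, h1, h2, h3, h4⟩ := buildPat S z col hcolinj _ hmaster hzS
      (fun i j => i ≤ j) (fun i => 2*i) (fun j => 2*j)
      (by intro i hi; omega) (by intro j hj; omega) (by intro j j' _ _ h; omega)
      (by
        intro i j
        split_ifs with ha hb hcc <;>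
          simp only [Bool.not_false, Bool.not_true, Fin.lt_def, Fin.le_def, Fin.ext_iff,
            eq_self_iff_true, Bool.false_eq_true, true_iff, false_iff, iff_true, iff_false,
            not_lt, not_le, ne_eq, not_not] <;> omega)
      (by
        intro i i' h
        exact le_antisymm ((h i').mpr le_rfl) ((h i).mp le_rfl))
    exact ⟨x, g, h1, h2, h3, Or.inr (Or.inr (Or.inl h4))⟩
  -- case (false, true, true) : q ≠ p+1 : with s j = j+1 : pattern ne
  · obtain ⟨x, g, h1, h2, h3, h4⟩ := buildPat S z col hcolinj _ hmaster hzS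
      (fun i j => i ≠ j) (fun i => i) (fun j => j+1)
      (by intro i hi; omega) (by intro j hj; omega) (by intro j j' _ _ h; omega)
      (by
        intro i j
        split_ifs with ha hb hcc <;>
          simp only [Bool.not_false, Bool.not_true, Fin.lt_def, Fin.le_def, Fin.ext_iff,
            eq_self_iff_true, Bool.false_eq_true, true_iff, false_iff, iff_true, iff_false,
            not_lt, not_le, ne_eq, not_not] <;> omega)
      (by
        intro i i' h
        have : ¬ i' ≠ i := fun hn => (h i).mpr hn rfl
        exact (not_not.mp this).symm)
    exact ⟨x, g, h1, h2, h3, Or.inr (Or.inl h4)⟩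
  -- case (true, false, false) : q = p+1 : with s j = j+1 : pattern eq
  · obtain ⟨x, g, h1, h2, h3, h4⟩ := buildPat S z col hcolinj _ hmaster hzS
      (fun i j => i = j) (fun i => i) (fun j => j+1)
      (by intro i hi; omega) (by intro j hj; omega) (by intro j j' _ _ h; omega)
      (by
        intro i j
        split_ifs with ha hb hcc <;>
          simp only [Bool.not_false, Bool.not_true, Fin.lt_def, Fin.le_def, Fin.ext_iff,
            eq_self_iff_true, Bool.false_eq_true, true_iff, false_iff, iff_true, iff_false,
            not_lt, not_le, ne_eq, not_not] <;> omega)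
      (by intro i i' h; exact ((h i).mp rfl).symm)
    exact ⟨x, g, h1, h2, h3, Or.inl h4⟩
  -- case (true, false, true) : q < p ∨ q = p+1 : with r=2i, s=2j : pattern gt
  · obtain ⟨x, g, h1, h2, h3, h4⟩ := buildPat S z col hcolinj _ hmaster hzS
      (fun i j => j < i) (fun i => 2*i) (fun j => 2*j)
      (by intro i hi; omega) (by intro j hj; omega) (by intro j j' _ _ h; omega)
      (by
        intro i j
        split_ifs with ha hb hcc <;>
          simp only [Bool.not_false, Bool.not_true, Fin.lt_def, Fin.le_def, Fin.ext_iff,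
            eq_self_iff_true, Bool.false_eq_true, true_iff, false_iff, iff_true, iff_false,
            not_lt, not_le, ne_eq, not_not] <;> omega)
      (by
        intro i i' h
        have ha : ¬ i < i' := fun hh => absurd ((h i).mpr hh) (lt_irrefl i)
        have hb : ¬ i' < i := fun hh => absurd ((h i').mp hh) (lt_irrefl i')
        exact le_antisymm (not_lt.mp hb) (not_lt.mp ha))
    exact ⟨x, g, h1, h2, h3, Or.inr (Or.inr (Or.inr h4))⟩
  -- case (true, true, false) : q > p : with s j = j+1 : pattern le
  · obtain ⟨x, g, h1, h2, h3, h4⟩ := buildPat S z col hcolinj _ hmaster hzS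
      (fun i j => i ≤ j) (fun i => i) (fun j => j+1)
      (by intro i hi; omega) (by intro j hj; omega) (by intro j j' _ _ h; omega)
      (by
        intro i j
        split_ifs with ha hb hcc <;>
          simp only [Bool.not_false, Bool.not_true, Fin.lt_def, Fin.le_def, Fin.ext_iff,
            eq_self_iff_true, Bool.false_eq_true, true_iff, false_iff, iff_true, iff_false,
            not_lt, not_le, ne_eq, not_not] <;> omega)
      (by
        intro i i' h
        exact le_antisymm ((h i').mpr le_rfl) ((h i).mp le_rfl))
    exact ⟨x, g, h1, h2, h3, Or.inr (Or.inr (Or.inl h4))⟩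
  -- case (true, true, true) : q ≠ p : pattern ne
  · obtain ⟨x, g, h1, h2, h3, h4⟩ := buildPat S z col hcolinj _ hmaster hzS
      (fun i j => i ≠ j) (fun i => i) (fun j => j)
      (by intro i hi; omega) (by intro j hj; omega) (by intro j j' _ _ h; exact h)
      (by
        intro i j
        split_ifs with ha hb hcc <;>
          simp only [Bool.not_false, Bool.not_true, Fin.lt_def, Fin.le_def, Fin.ext_iff,
            eq_self_iff_true, Bool.false_eq_true, true_iff, false_iff, iff_true, iff_false,
            not_lt, not_le, ne_eq, not_not] <;> omega)
      (by
        intro i i' h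
        have : ¬ i' ≠ i := fun hn => (h i).mpr hn rfl
        exact (not_not.mp this).symm)
    exact ⟨x, g, h1, h2, h3, Or.inr (Or.inl h4)⟩

-- === application part (to be appended after the statement's definitions) ===

lemma Imat_entry (ℓ a b : ℕ) (i j : Fin ℓ) : Imat ℓ a b i j = a ∨ Imat ℓ a b i j = b := by
  unfold Imat; split <;> simp

lemma Tmat_entry (ℓ a b : ℕ) (i j : Fin ℓ) : Tmat ℓ a b i j = a ∨ Tmat ℓ a b i j = b := by
  unfold Tmat; split <;> simp

lemma not_mem_TFam2 {ℓ : ℕ} (M : MatN ℓ ℓ) (i j : Fin ℓ) (h2 : M i j = 2) :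
    (⟨ℓ, ℓ, M⟩ : CMat) ∉ TFam ℓ 2 := by
  rintro ⟨a, b, ha, hb, hab, h | h⟩ <;>
  · injection h with h1 h2' h3
    subst h3
    first
    | rcases Imat_entry ℓ a b i j with he | he <;> omega
    | rcases Tmat_entry ℓ a b i j with he | he <;> omega

lemma config_of_table {m n ℓ : ℕ} (A : MatN m n) (x : Fin ℓ → Fin m) (g : Fin ℓ → Fin n)
    (hx : Function.Injective x) (hg : Function.Injective g) (P : Fin ℓ → Fin ℓ → Prop)
    (v : ℕ) (hA : ∀ i j, (P i j → A (x i) (g j) = 2) ∧ (¬ P i j → A (x i) (g j) = v))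
    (M : MatN ℓ ℓ) (hM : ∀ i j, (P i j → M i j = 2) ∧ (¬ P i j → M i j = v)) : IsConfig M A :=
  ⟨x, g, hx, hg, fun i j => by
    by_cases h : P i j
    · rw [(hA i j).1 h, (hM i j).1 h]
    · rw [(hA i j).2 h, (hM i j).2 h]⟩

lemma main_bound (ℓ : ℕ) (hℓ : 4 ≤ ℓ) : ∃ c : ℕ, ∀ (m n : ℕ) (A : MatN m n),
    RMat 3 A → SimpleM A →
    AvoidsFam A ((TFam ℓ 3 \ TFam ℓ 2) ∪ {⟨1, 2, !![0, 1]⟩}) → n ≤ c := by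
  classical
  obtain ⟨N, hN⟩ := BBmain ℓ (by omega)
  refine ⟨N * N, fun m n A hR hS hAv => ?_⟩
  set X : Finset (Fin m) := Finset.univ.filter (fun i => ∀ j, A i j ≠ 1) with hX
  have h01 : ∀ (i : Fin m) (j₀ j₁ : Fin n), j₀ ≠ j₁ → A i j₀ = 0 → A i j₁ = 1 → False := by
    intro i j₀ j₁ hne h0 h1
    apply hAv ⟨1, 2, !![0, 1]⟩ (Set.mem_union_right _ rfl)
    refine ⟨fun _ => i, ![j₀, j₁], fun a b _ => Subsingleton.elim a b, ?_, ?_⟩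
    · intro a b hab
      fin_cases a <;> fin_cases b <;>
        first
        | rfl
        | (exfalso; exact hne (by simpa using hab))
        | (exfalso; exact hne (Eq.symm (by simpa using hab)))
    · intro a b
      fin_cases a <;> fin_cases b <;> simp [h0, h1]
  have hXmem : ∀ i, i ∈ X ↔ ∀ j, A i j ≠ 1 := by
    intro i; rw [hX]; simp
  have hX0 : ∀ i, i ∉ X → ∀ j, A i j ≠ 0 := by
    intro i hi j h0
    rw [hXmem] at hi
    push_neg at hi
    obtain ⟨j₁, hj₁⟩ := hi
    have hne : j ≠ j₁ := by
      intro h; rw [h] at h0; omega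
    exact h01 i j j₁ hne h0 hj₁
  have hval : ∀ (i : Fin m) (j : Fin n), A i j ≠ 2 → A i j = if i ∈ X then 0 else 1 := by
    intro i j h2
    have h3 := hR i j
    by_cases hx : i ∈ X
    · rw [if_pos hx]
      have := (hXmem i).mp hx j
      omega
    · rw [if_neg hx]
      have := hX0 i hx j
      omega
  set SX : Fin n → Finset (Fin m) := fun j => X.filter (fun i => A i j = 2) with hSX
  set SY : Fin n → Finset (Fin m) := fun j => Xᶜ.filter (fun i => A i j = 2) with hSY
  -- the pair (SX j, SY j) determines the column
  have hpairinj : Function.Injective (fun j => (SX j, SY j)) := by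
    intro j j' h
    have hx : SX j = SX j' := congrArg Prod.fst h
    have hy : SY j = SY j' := congrArg Prod.snd h
    apply hS
    intro i
    have hm2 : A i j = 2 ↔ A i j' = 2 := by
      by_cases hiX : i ∈ X
      · constructor <;> intro hh
        · have : i ∈ SX j := by rw [hSX]; simp [hiX, hh]
          rw [hx, hSX] at this; simp at this; exact this.2
        · have : i ∈ SX j' := by rw [hSX]; simp [hiX, hh]
          rw [← hx, hSX] at this; simp at this; exact this.2
      · constructor <;> intro hh
        · have : i ∈ SY j := by rw [hSY]; simp [hiX, hh]
          rw [hy, hSY] at this; simp at this; exact this.2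
        · have : i ∈ SY j' := by rw [hSY]; simp [hiX, hh]
          rw [← hy, hSY] at this; simp at this; exact this.2
    by_cases h2 : A i j = 2
    · rw [h2, (hm2.mp h2)]
    · have h2' : A i j' ≠ 2 := fun hh => h2 (hm2.mpr hh)
      rw [hval i j h2, hval i j' h2']
  -- generic side bound
  have side : ∀ (W : Finset (Fin m)) (SS : Fin n → Finset (Fin m)) (v : ℕ), v < 2 →
      (∀ i ∈ W, (if i ∈ X then 0 else 1) = v) →
      (∀ j, SS j = W.filter (fun i => A i j = 2)) →
      (Finset.univ.image SS).card ≤ N := by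
    intro W SS v hv hWv hSS
    by_contra hbig
    push_neg at hbig
    set n' := (Finset.univ.image SS).card with hn'
    set E := (Finset.univ.image SS).equivFin with hE
    set T : Fin n' → Finset (Fin m) := fun t => ((E.symm t : Finset (Fin m))) with hT
    have hTinj : Function.Injective T := by
      intro a b h
      apply E.symm.injective
      exact Subtype.ext h
    have hTmem : ∀ t, T t ∈ Finset.univ.image SS := fun t => (E.symm t).2
    obtain ⟨x, g, hxinj, hginj, hxS, hpat⟩ := hN (Fin m) n' T hTinj (by omega)
    -- pick columns realizing the sets
    have hcols : ∀ t : Fin ℓ, ∃ col : Fin n, SS col = T (g t) := by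
      intro t
      have := hTmem (g t)
      rw [Finset.mem_image] at this
      obtain ⟨col, _, hcol⟩ := this
      exact ⟨col, hcol⟩
    set g' : Fin ℓ → Fin n := fun t => (hcols t).choose with hg'
    have hg'v : ∀ t, SS (g' t) = T (g t) := fun t => (hcols t).choose_spec
    have hg'inj : Function.Injective g' := by
      intro a b h
      apply hginj
      apply hTinj
      rw [← hg'v a, ← hg'v b, h]
    -- every x i is in W
    have hxW : ∀ i, x i ∈ W := by
      intro i
      obtain ⟨j0, hj0⟩ := hxS i
      have := hTmem j0
      rw [Finset.mem_image] at this
      obtain ⟨col, _, hcol⟩ := this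
      rw [← hcol, hSS] at hj0
      exact (Finset.mem_filter.mp hj0).1
    -- build the table
    have key : ∀ (P : Fin ℓ → Fin ℓ → Prop), (∀ i j, x i ∈ T (g j) ↔ P i j) →
        ∀ i j, (P i j → A (x i) (g' j) = 2) ∧ (¬ P i j → A (x i) (g' j) = v) := by
      intro P hP i j
      have hiff : A (x i) (g' j) = 2 ↔ P i j := by
        rw [← hP i j, ← hg'v j, hSS]
        simp [Finset.mem_filter, hxW i]
      constructor
      · intro hp; exact hiff.mpr hp
      · intro hp
        have h2 : A (x i) (g' j) ≠ 2 := fun hh => hp (hiff.mp hh)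
        rw [hval _ _ h2]
        exact hWv _ (hxW i)
    rcases hpat with hp | hp | hp | hp
    · exact hAv ⟨ℓ, ℓ, Imat ℓ 2 v⟩
        (Set.mem_union_left _ ⟨⟨2, v, by omega, by omega, by omega, Or.inl rfl⟩,
          not_mem_TFam2 _ ⟨0, by omega⟩ ⟨0, by omega⟩ (by simp [Imat])⟩)
        (config_of_table A x g' hxinj hg'inj (fun i j => i = j) v (key _ hp) _
          (fun i j => ⟨fun h => by simp [Imat, h], fun h => by simp [Imat, h]⟩))
    · exact hAv ⟨ℓ, ℓ, Imat ℓ v 2⟩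
        (Set.mem_union_left _ ⟨⟨v, 2, by omega, by omega, by omega, Or.inl rfl⟩,
          not_mem_TFam2 _ ⟨0, by omega⟩ ⟨1, by omega⟩ (by simp [Imat, Fin.ext_iff])⟩)
        (config_of_table A x g' hxinj hg'inj (fun i j => i ≠ j) v (key _ hp) _
          (fun i j => ⟨fun h => by simp [Imat, h], fun h => by
            simp only [Imat, not_not] at h ⊢
            rw [if_pos h]⟩))
    · exact hAv ⟨ℓ, ℓ, Tmat ℓ v 2⟩
        (Set.mem_union_left _ ⟨⟨v, 2, by omega, by omega, by omega, Or.inr rfl⟩,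
          not_mem_TFam2 _ ⟨0, by omega⟩ ⟨0, by omega⟩ (by simp [Tmat])⟩)
        (config_of_table A x g' hxinj hg'inj (fun i j => i ≤ j) v (key _ hp) _
          (fun i j => ⟨fun h => by
              have h' : ¬ ((j : ℕ) < (i : ℕ)) := by
                have := Fin.le_def.mp h; omega
              simp [Tmat, h'],
            fun h => by
              have h' : (j : ℕ) < (i : ℕ) := by
                have : ¬ ((i : ℕ) ≤ (j : ℕ)) := fun hh => h (Fin.le_def.mpr hh)
                omega
              simp [Tmat, h']⟩))
    · exact hAv ⟨ℓ, ℓ, Tmat ℓ 2 v⟩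
        (Set.mem_union_left _ ⟨⟨2, v, by omega, by omega, by omega, Or.inr rfl⟩,
          not_mem_TFam2 _ ⟨1, by omega⟩ ⟨0, by omega⟩ (by simp [Tmat])⟩)
        (config_of_table A x g' hxinj hg'inj (fun i j => j < i) v (key _ hp) _
          (fun i j => ⟨fun h => by
              have h' : (j : ℕ) < (i : ℕ) := Fin.lt_def.mp h
              simp [Tmat, h'],
            fun h => by
              have h' : ¬ ((j : ℕ) < (i : ℕ)) := fun hh => h (Fin.lt_def.mpr hh)
              simp [Tmat, h']⟩))
  have hsideX : (Finset.univ.image SX).card ≤ N := by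
    apply side X SX 0 (by omega)
    · intro i hi; rw [if_pos hi]
    · intro j; rw [hSX]
  have hsideY : (Finset.univ.image SY).card ≤ N := by
    apply side Xᶜ SY 1 (by omega)
    · intro i hi
      rw [if_neg (Finset.mem_compl.mp hi)]
    · intro j; rw [hSY]
  have himg : Finset.univ.image (fun j => (SX j, SY j)) ⊆
      (Finset.univ.image SX) ×ˢ (Finset.univ.image SY) := by
    intro p hp
    rw [Finset.mem_image] at hp
    obtain ⟨j, _, rfl⟩ := hp
    rw [Finset.mem_product]
    exact ⟨Finset.mem_image_of_mem _ (Finset.mem_univ j),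
      Finset.mem_image_of_mem _ (Finset.mem_univ j)⟩
  calc n = (Finset.univ : Finset (Fin n)).card := by rw [Finset.card_univ, Fintype.card_fin]
    _ = (Finset.univ.image (fun j => (SX j, SY j))).card :=
        (Finset.card_image_of_injective _ hpairinj).symm
    _ ≤ ((Finset.univ.image SX) ×ˢ (Finset.univ.image SY)).card := Finset.card_le_card himg
    _ = (Finset.univ.image SX).card * (Finset.univ.image SY).card := Finset.card_product _ _
    _ ≤ N * N := Nat.mul_le_mul hsideX hsideY

end AuxiliaryForStmt3

/-- For `ℓ ≥ 4`, `forb(m, 3, (𝒯_ℓ(3) \ 𝒯_ℓ(2)) ∪ {[0 1]})` is `Θ(1)`: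
it is bounded by a constant depending only on `ℓ`. -/
theorem stmt3 (ℓ : ℕ) (hℓ : 4 ≤ ℓ) :
    ∃ c : ℕ, ∀ m : ℕ, 1 ≤ m →
      forb m 3 ((TFam ℓ 3 \ TFam ℓ 2) ∪ {⟨1, 2, !![0, 1]⟩}) ≤ c := by
  obtain ⟨c, hc⟩ := main_bound ℓ hℓ
  refine ⟨c, fun m _ => ?_⟩
  apply csSup_le'
  rintro n ⟨A, hR, hS, hAv⟩
  exact hc m n A hR hS hAv
end
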